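/- arXiv:0710.0887 — 2 statements merged into one kernel-verified Lean document; each statement's English description precedes it below -/
import Mathlib

section
/- Let V be a C_2-cofinite vertex operator algebra. Then Zhu's algebra A(V) = V/O(V) is finite-dimensional. -/
open scoped BigOperators

namespace VOAPaper

/-- Integer binomial coefficient `C(m, i)` for `m : ℤ`, `i : ℕ`. -/
def zchoose (m : ℤ) (i : ℕ) : ℤ :=
  if 0 ≤ m then ((m.toNat).choose i : ℤ)
  else (-1) ^ i * ((((i : ℤ) - m - 1).toNat).choose i : ℤ)

variable (V : Type) [AddCommGroup V] [Module ℂ V]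

/-- A vertex algebra structure on `V`: modes `u_n`, vacuum, truncation,
vacuum/creation axioms, and the Borcherds (Jacobi) identity. -/
structure VertexAlg where
  mode : V →ₗ[ℂ] ℤ → Module.End ℂ V
  vac : V
  trunc : ∀ u w : V, ∃ N : ℤ, ∀ n : ℤ, N ≤ n → mode u n w = 0
  vac_mode : ∀ (n : ℤ) (w : V), mode vac n w = if n = -1 then w else 0
  creation_neg_one : ∀ u : V, mode u (-1) vac = u
  creation_nonneg : ∀ (u : V) (n : ℤ), 0 ≤ n → mode u n vac = 0
  borcherds : ∀ (u v w : V) (p q m : ℤ),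
    (∑ᶠ i : ℕ, zchoose m i • mode (mode u (p + i) v) (m + q - i) w) =
    (∑ᶠ i : ℕ, ((-1 : ℤ) ^ i * zchoose p i) •
      (mode u (p + m - i) (mode v (q + i) w)
        - (p.negOnePow : ℤ) • mode v (p + q - i) (mode u (m + i) w)))

/-- A vertex operator algebra of CFT-type: a vertex algebra with conformal
vector `ω`, central charge `c`, an `L(0)`-grading `V = ⊕_{n ≥ 0} V_n` with
`V_0 = ℂ 1`, Virasoro relations, and the `L(-1)`-derivation property. -/
structure VOA extends VertexAlg V where
  ω : V
  c : ℂ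
  grading : ℤ → Submodule ℂ V
  internal : DirectSum.IsInternal grading
  neg_bot : ∀ n : ℤ, n < 0 → grading n = ⊥
  L0_eigen : ∀ (n : ℤ) (v : V), v ∈ grading n → mode ω 1 v = (n : ℂ) • v
  vac_grade : vac ∈ grading 0
  cft : grading 0 = Submodule.span ℂ {vac}
  ω_grade : ω ∈ grading 2
  virasoro : ∀ m n : ℤ,
    mode ω (m + 1) * mode ω (n + 1) - mode ω (n + 1) * mode ω (m + 1)
      = (m - n) • mode ω (m + n + 1)
        + (if m + n = 0 then ((m ^ 3 - m : ℂ) / 12) * c else 0) • (1 : Module.End ℂ V)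
  Lneg1_deriv : ∀ (u : V) (n : ℤ), mode (mode ω 0 u) n = (-n) • mode u (n - 1)

/-- A weak module for (the underlying vertex algebra of) `V`. -/
structure WeakMod (A : VertexAlg V) (M : Type) [AddCommGroup M] [Module ℂ M] where
  mmode : V →ₗ[ℂ] ℤ → Module.End ℂ M
  trunc : ∀ (v : V) (w : M), ∃ N : ℤ, ∀ n : ℤ, N ≤ n → mmode v n w = 0
  vac_mode : ∀ (n : ℤ) (w : M), mmode A.vac n w = if n = -1 then w else 0
  borcherds : ∀ (u v : V) (w : M) (p q m : ℤ),
    (∑ᶠ i : ℕ, zchoose m i • mmode (A.mode u (p + i) v) (m + q - i) w) =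
    (∑ᶠ i : ℕ, ((-1 : ℤ) ^ i * zchoose p i) •
      (mmode u (p + m - i) (mmode v (q + i) w)
        - (p.negOnePow : ℤ) • mmode v (p + q - i) (mmode u (m + i) w)))

/-- An ℕ-gradable weak module: a weak module with a compatible
lower-truncated grading `M = ⊕_{n ≥ 0} M(n)`. -/
structure NGradedMod (W : VOA V) (M : Type) [AddCommGroup M] [Module ℂ M]
    extends WeakMod V W.toVertexAlg M where
  mgrading : ℤ → Submodule ℂ M
  internal : DirectSum.IsInternal mgrading
  neg_bot : ∀ n : ℤ, n < 0 → mgrading n = ⊥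
  compat : ∀ (r : ℤ) (v : V), v ∈ W.grading r → ∀ (m n : ℤ), ∀ w ∈ mgrading n,
    mmode v m w ∈ mgrading (n + r - m - 1)

/-- Iterated application of modes: `applyModes [(u¹,n₁),…,(uʳ,nᵣ)] w = u¹_{n₁} ⋯ uʳ_{nᵣ} w`. -/
def applyModes (A : VertexAlg V) : List (V × ℤ) → V → V
  | [], w => w
  | p :: L, w => A.mode p.1 p.2 (applyModes A L w)

/-- Iterated application of module modes. -/
def applyModesM {M : Type} [AddCommGroup M] [Module ℂ M] {A : VertexAlg V}
    (Mod : WeakMod V A M) : List (V × ℤ) → M → M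
  | [], w => w
  | p :: L, w => Mod.mmode p.1 p.2 (applyModesM Mod L w)

/-- The subspace `C_n(V) = span{ u_{-n} v }`. -/
def Cspace (A : VertexAlg V) (n : ℕ) : Submodule ℂ V :=
  Submodule.span ℂ { x | ∃ u v : V, x = A.mode u (-(n : ℤ)) v }

/-- The subspace `C_1(V) = span{ u_{-1} v, L(-1)u : u, v ∈ V_+ }`. -/
def C1space (W : VOA V) : Submodule ℂ V :=
  Submodule.span ℂ
    ({ x | ∃ u v : V, (∃ r : ℤ, 0 < r ∧ u ∈ W.grading r) ∧
        (∃ r : ℤ, 0 < r ∧ v ∈ W.grading r) ∧ x = W.mode u (-1) v }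
      ∪ { x | ∃ u : V, (∃ r : ℤ, 0 < r ∧ u ∈ W.grading r) ∧ x = W.mode W.ω 0 u })

/-- A submodule invariant under all modes. -/
def Invariant {M : Type} [AddCommGroup M] [Module ℂ M] {A : VertexAlg V}
    (Mod : WeakMod V A M) (N : Submodule ℂ M) : Prop :=
  ∀ (v : V) (n : ℤ), ∀ w ∈ N, Mod.mmode v n w ∈ N

/-- Irreducibility of a weak module. -/
def IsIrreducibleMod {M : Type} [AddCommGroup M] [Module ℂ M] {A : VertexAlg V}
    (Mod : WeakMod V A M) : Prop :=
  (⊤ : Submodule ℂ M) ≠ ⊥ ∧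
    ∀ N : Submodule ℂ M, Invariant V Mod N → N = ⊥ ∨ N = ⊤

/-- `O(V) = span{ Res_x (1+x)^{wt u} x^{-2} Y(u,x)v } = span{ Σ_i C(wt u, i) u_{i-2} v }`. -/
def Ospace (W : VOA V) : Submodule ℂ V :=
  Submodule.span ℂ { x | ∃ (r : ℤ) (u v : V), u ∈ W.grading r ∧
    x = ∑ᶠ i : ℕ, zchoose r i • W.mode u ((i : ℤ) - 2) v }


noncomputable instance instDecNeSub {V : Type} [AddCommGroup V] [Module ℂ V]
    (q : ℤ → Submodule ℂ V) (i : ℤ) (x : q i) : Decidable (x ≠ 0) := Classical.dec _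

section Aux
open scoped DirectSum
variable {V}

section Dec
variable (p : ℤ → Submodule ℂ V) (hp : DirectSum.IsInternal p)

noncomputable def vdec : V ≃ₗ[ℂ] ⨁ i, p i :=
  (LinearEquiv.ofBijective (DirectSum.coeLinearMap p) hp).symm

noncomputable def vproj (n : ℤ) : V →ₗ[ℂ] V :=
  (p n).subtype ∘ₗ (DFinsupp.lapply n) ∘ₗ (vdec p hp).toLinearMap

theorem proj_mem (n : ℤ) (x : V) : vproj p hp n x ∈ p n := (vdec p hp x n).2

theorem proj_of_mem {m : ℤ} {x : V} (hx : x ∈ p m) (n : ℤ) :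
    vproj p hp n x = if n = m then x else 0 := by
  split_ifs with h
  · subst h
    exact congrArg Subtype.val (hp.ofBijective_coeLinearMap_of_mem hx)
  · exact congrArg Subtype.val (hp.ofBijective_coeLinearMap_of_mem_ne (Ne.symm h) hx)

theorem sum_proj (x : V) :
    x = ∑ k ∈ (vdec p hp x).support, vproj p hp k x := by
  classical
  conv_lhs => rw [← (vdec p hp).symm_apply_apply x]
  have h1 : (vdec p hp x) = ∑ k ∈ (vdec p hp x).support,
      DirectSum.of (fun i => p i) k (vdec p hp x k) := (DirectSum.sum_support_of _).symm
  calc (vdec p hp).symm.toLinearMap (vdec p hp x)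
      = ∑ k ∈ (vdec p hp x).support,
        (vdec p hp).symm.toLinearMap (DirectSum.of (fun i => p i) k (vdec p hp x k)) := by
        rw [← map_sum, ← h1]
    _ = ∑ k ∈ (vdec p hp x).support, vproj p hp k x := by
        refine Finset.sum_congr rfl fun k _ => ?_
        have h2 : (vdec p hp).symm.toLinearMap (DirectSum.of (fun i => p i) k (vdec p hp x k))
            = DirectSum.coeLinearMap p (DirectSum.of (fun i => p i) k (vdec p hp x k)) := by
          rfl
        rw [h2, DirectSum.coeLinearMap_of]
        rfl

theorem mem_of_proj {T : Submodule ℂ V} {x : V} (hx : ∀ k, vproj p hp k x ∈ T) : x ∈ T := by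
  rw [sum_proj p hp x]; exact Submodule.sum_mem _ fun k _ => hx k

theorem proj_span_le {S : Set V} (hS : ∀ x ∈ S, ∃ k, x ∈ p k) (n : ℤ) :
    ∀ x ∈ Submodule.span ℂ S, vproj p hp n x ∈ Submodule.span ℂ S := by
  intro x hx
  have : Submodule.span ℂ S ≤ (Submodule.span ℂ S).comap (vproj p hp n) := by
    rw [Submodule.span_le]
    intro y hy
    obtain ⟨k, hk⟩ := hS y hy
    simp only [Set.mem_preimage, SetLike.mem_coe, Submodule.mem_comap]
    rw [proj_of_mem p hp hk]
    split_ifs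
    · exact Submodule.subset_span hy
    · exact Submodule.zero_mem _
  exact this hx

end Dec

/-- Eigenvectors of `L(0)` with integer eigenvalue `n` lie in `grading n`. -/
theorem eigen_mem (W : VOA V) {x : V} {n : ℤ}
    (hx : W.mode W.ω 1 x = (n : ℂ) • x) : x ∈ W.grading n := by
  set p := W.grading with hpdef
  set hp := W.internal
  have hzero : ∀ j : ℤ, j ≠ n → vproj p hp j x = 0 := by
    intro j hj
    have hL0 : W.mode W.ω 1 x
        = ∑ k ∈ (vdec p hp x).support, (k : ℂ) • vproj p hp k x := by
      conv_lhs => rw [sum_proj p hp x, map_sum]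
      exact Finset.sum_congr rfl fun k _ => W.L0_eigen k _ (proj_mem p hp k x)
    have hkey : ∑ k ∈ (vdec p hp x).support, (k : ℂ) • vproj p hp k x = (n : ℂ) • x := by
      rw [← hL0, hx]
    have h2 := congrArg (vproj p hp j) hkey
    rw [map_sum, map_smul] at h2
    have h3 : ∀ k ∈ (vdec p hp x).support,
        vproj p hp j ((k : ℂ) • vproj p hp k x) = (k : ℂ) • (if j = k then vproj p hp k x else 0) := by
      intro k _
      rw [map_smul, proj_of_mem p hp (proj_mem p hp k x)]
    rw [Finset.sum_congr rfl h3] at h2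
    have h4 : ∑ k ∈ (vdec p hp x).support,
        (k : ℂ) • (if j = k then vproj p hp k x else 0) = (j : ℂ) • vproj p hp j x := by
      by_cases hjs : j ∈ (vdec p hp x).support
      · rw [Finset.sum_eq_single_of_mem j hjs]
        · simp
        · intro k _ hk
          rw [if_neg (Ne.symm hk), smul_zero]
      · have hjx : vproj p hp j x = 0 := by
          have := DFinsupp.notMem_support_iff.mp hjs
          show ((vdec p hp x) j : V) = 0
          rw [this]; rfl
        rw [hjx, smul_zero, Finset.sum_eq_zero]
        intro k hk
        rw [if_neg, smul_zero]
        rintro rfl; exact hjs hk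
      
    rw [h4] at h2
    have h5 : ((j : ℂ) - (n : ℂ)) • vproj p hp j x = 0 := by
      rw [sub_smul, h2, sub_self]
    rcases smul_eq_zero.mp h5 with h6 | h6
    · exfalso
      apply hj
      exact_mod_cast sub_eq_zero.mp h6
    · exact h6
  rw [sum_proj p hp x]
  refine Submodule.sum_mem _ fun k _ => ?_
  by_cases hk : k = n
  · subst hk; exact proj_mem p hp k x
  · rw [hzero k hk]; exact Submodule.zero_mem _


theorem zchoose_nonneg (m : ℤ) (hm : 0 ≤ m) (i : ℕ) :
    zchoose m i = ((m.toNat).choose i : ℤ) := if_pos hm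

theorem zchoose_zero_right (m : ℤ) (hm : 0 ≤ m) : zchoose m 0 = 1 := by
  rw [zchoose_nonneg m hm]; simp

theorem zchoose_one (i : ℕ) (hi : 2 ≤ i) : zchoose 1 i = 0 := by
  rw [zchoose_nonneg 1 (by norm_num)]
  norm_cast
  exact Nat.choose_eq_zero_of_lt (by omega)

theorem zchoose_zero_left (i : ℕ) (hi : 1 ≤ i) : zchoose 0 i = 0 := by
  rw [zchoose_nonneg 0 le_rfl]
  norm_cast
  exact Nat.choose_eq_zero_of_lt (by omega)

/-- `L(0) (a_m v) = (r + s - m - 1) a_m v` for homogeneous `a, v`. -/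
theorem L0_mode (W : VOA V) {r s : ℤ} {a v : V} (ha : a ∈ W.grading r)
    (hv : v ∈ W.grading s) (m : ℤ) :
    W.mode W.ω 1 (W.mode a m v) = ((r + s - m - 1 : ℤ) : ℂ) • W.mode a m v := by
  have hb := W.borcherds W.ω a v 0 m 1
  -- reduce LHS finsum to the sum over {0, 1}
  have hLHS : (∑ᶠ i : ℕ, zchoose 1 i • W.mode (W.mode W.ω (0 + (i : ℤ)) a) (1 + m - i) v)
      = W.mode (W.mode W.ω 0 a) (1 + m) v + W.mode (W.mode W.ω 1 a) m v := by
    rw [finsum_eq_finset_sum_of_support_subset _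
      (s := Finset.range 2) (Function.support_subset_iff'.mpr (fun i hi => by
        have h2 : 2 ≤ i := by
          simp only [Finset.coe_range, Set.mem_Iio, not_lt] at hi; exact hi
        rw [zchoose_one i h2, zero_smul]))]
    simp only [Finset.sum_range_succ, Finset.sum_range_zero]
    norm_num [zchoose]
  -- reduce RHS finsum to the single term i = 0
  have hRHS : (∑ᶠ i : ℕ, ((-1 : ℤ) ^ i * zchoose 0 i) •
      (W.mode W.ω (0 + 1 - (i : ℤ)) (W.mode a (m + i) v)
        - ((0 : ℤ).negOnePow : ℤ) • W.mode a (0 + m - i) (W.mode W.ω (1 + i) v)))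
      = W.mode W.ω 1 (W.mode a m v) - W.mode a m (W.mode W.ω 1 v) := by
    rw [finsum_eq_single _ 0 (fun i hi => by
      rw [zchoose_zero_left i (by omega), mul_zero, zero_smul])]
    norm_num [zchoose]
  rw [hLHS, hRHS] at hb
  -- compute the three pieces
  have h1 : W.mode (W.mode W.ω 0 a) (1 + m) v = (-(1 + m)) • W.mode a m v := by
    rw [W.Lneg1_deriv a (1 + m)]
    have : 1 + m - 1 = m := by ring
    rw [this]
    rfl
  have h2 : W.mode (W.mode W.ω 1 a) m v = (r : ℂ) • W.mode a m v := by
    rw [W.L0_eigen r a ha, map_smul]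
    rfl
  have h3 : W.mode a m (W.mode W.ω 1 v) = (s : ℂ) • W.mode a m v := by
    rw [W.L0_eigen s v hv, map_smul]
  rw [h1, h2, h3] at hb
  have h4 : (-(1 + m)) • W.mode a m v = ((-(1 + m) : ℤ) : ℂ) • W.mode a m v := by
    rw [Int.cast_smul_eq_zsmul]
  rw [h4] at hb
  have : W.mode W.ω 1 (W.mode a m v)
      = ((-(1 + m) : ℤ) : ℂ) • W.mode a m v + (r : ℂ) • W.mode a m v
        + (s : ℂ) • W.mode a m v := by
    rw [hb]; abel
  rw [this, ← add_smul, ← add_smul]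
  congr 1
  push_cast
  ring

/-- Modes map homogeneous pieces to homogeneous pieces. -/
theorem mode_mem_grading (W : VOA V) {r s : ℤ} {a v : V} (ha : a ∈ W.grading r)
    (hv : v ∈ W.grading s) (m : ℤ) :
    W.mode a m v ∈ W.grading (r + s - m - 1) :=
  eigen_mem W (L0_mode W ha hv m)



end Aux

section Aux2
variable {V}

theorem ospace_sum (W : VOA V) {r : ℤ} {u : V} (hu : u ∈ W.grading r) (v : V) :
    ∃ K : ℕ, 0 < K ∧
      (∑ i ∈ Finset.range K, zchoose r i • W.mode u ((i : ℤ) - 2) v) ∈ Ospace V W := by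
  obtain ⟨N, hN⟩ := W.trunc u v
  refine ⟨(N + 2).toNat + 1, Nat.succ_pos _, ?_⟩
  have hfin : (∑ᶠ i : ℕ, zchoose r i • W.mode u ((i : ℤ) - 2) v)
      = ∑ i ∈ Finset.range ((N + 2).toNat + 1), zchoose r i • W.mode u ((i : ℤ) - 2) v := by
    apply finsum_eq_finset_sum_of_support_subset
    apply Function.support_subset_iff'.mpr
    intro i hi
    have h1 : (N + 2).toNat + 1 ≤ i := by
      simp only [Finset.coe_range, Set.mem_Iio, not_lt] at hi; exact hi
    have hNi : N ≤ (i : ℤ) - 2 := by omega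
    rw [hN _ hNi, smul_zero]
  rw [← hfin]
  exact Submodule.subset_span ⟨r, u, v, hu, rfl⟩

theorem mode_zero_left (W : VOA V) (n : ℤ) (v : V) : W.mode 0 n v = 0 := by
  rw [map_zero]; rfl

end Aux2

/-- If `V` is `C_2`-cofinite then Zhu's algebra `A(V) = V/O(V)` is finite-dimensional. -/
theorem stmt5 (W : VOA V)
    (h : FiniteDimensional ℂ (V ⧸ Cspace V W.toVertexAlg 2)) :
    FiniteDimensional ℂ (V ⧸ Ospace V W) := by
  set C2 := Cspace V W.toVertexAlg 2 with hC2def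
  set p := W.grading
  set hp := W.internal
  -- a finite set B with C2 ⊔ span B = ⊤
  obtain ⟨S, hSfin, hSspan⟩ := Submodule.fg_def.mp (Module.finite_def.mp h)
  let f : (V ⧸ C2) → V := Function.surjInv (Submodule.mkQ_surjective C2)
  set B : Set V := f '' S with hBdef
  have hBfin : B.Finite := hSfin.image f
  have hsup : C2 ⊔ Submodule.span ℂ B = ⊤ := by
    apply (Submodule.map_mkQ_eq_top C2 (Submodule.span ℂ B)).mp
    rw [Submodule.map_span]
    have himg : C2.mkQ '' B = S := by
      rw [hBdef, Set.image_image]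
      have : ∀ x : V ⧸ C2, C2.mkQ (f x) = x := fun x =>
        Function.surjInv_eq (Submodule.mkQ_surjective C2) x
      simp only [this, Set.image_id']
    rw [himg, hSspan]
  -- homogeneous components of B
  set B' : Set V := ⋃ b ∈ B, (fun k => vproj p hp k b) '' ↑((vdec p hp b).support)
    with hB'def
  have hB'fin : B'.Finite := hBfin.biUnion fun b _ => (Finset.finite_toSet _).image _
  have hB'hom : ∀ x ∈ B', ∃ k, x ∈ p k := by
    intro x hx
    simp only [hB'def, Set.mem_iUnion, Set.mem_image] at hx
    obtain ⟨b, _, k, _, rfl⟩ := hx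
    exact ⟨k, proj_mem p hp k b⟩
  have hBB' : Submodule.span ℂ B ≤ Submodule.span ℂ B' := by
    rw [Submodule.span_le]
    intro b hb
    rw [SetLike.mem_coe, sum_proj p hp b]
    refine Submodule.sum_mem _ fun k hk => Submodule.subset_span ?_
    simp only [hB'def, Set.mem_iUnion, Set.mem_image]
    exact ⟨b, hb, k, hk, rfl⟩
  have hsup' : C2 ⊔ Submodule.span ℂ B' = ⊤ :=
    eq_top_iff.mpr (hsup ▸ sup_le_sup_left hBB' C2)
  set T := Submodule.span ℂ B' ⊔ Ospace V W with hTdef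
  -- main induction on weights
  have main : ∀ K : ℕ, ∀ n : ℤ, n < K → p n ≤ T := by
    intro K
    induction K with
    | zero =>
      intro n hn x hx
      rw [show p n = ⊥ from W.neg_bot n (by exact_mod_cast hn)] at hx
      rw [(Submodule.mem_bot ℂ).mp hx]
      exact Submodule.zero_mem T
    | succ K ih =>
      intro n hn
      by_cases hnK : n < K
      · exact ih n hnK
      have hnEq : n = (K : ℤ) := by push_cast at hn ⊢; omega
      -- key claim: homogeneous u'_{-2} v' of total weight n lies in T
      have claim : ∀ (k l : ℤ) (u' v' : V), u' ∈ p k → v' ∈ p l →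
          k + l + 1 = n → W.mode u' (-2) v' ∈ T := by
        intro k l u' v' hu' hv' hkl
        by_cases hkneg : k < 0
        · have hz : u' = 0 := by
            rw [show p k = ⊥ from W.neg_bot k hkneg] at hu'
            exact (Submodule.mem_bot ℂ).mp hu'
          rw [hz, mode_zero_left]
          exact Submodule.zero_mem T
        by_cases hlneg : l < 0
        · have hz : v' = 0 := by
            rw [show p l = ⊥ from W.neg_bot l hlneg] at hv'
            exact (Submodule.mem_bot ℂ).mp hv'
          rw [hz, map_zero]
          exact Submodule.zero_mem T
        obtain ⟨Kt, hKt, hmem⟩ := ospace_sum W hu' v'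
        obtain ⟨Kt', rfl⟩ : ∃ Kt', Kt = Kt' + 1 := ⟨Kt - 1, by omega⟩
        rw [Finset.sum_range_succ'] at hmem
        have h0 : zchoose k 0 • W.mode u' (((0 : ℕ) : ℤ) - 2) v' = W.mode u' (-2) v' := by
          rw [zchoose_zero_right k (by omega)]
          norm_num
        rw [h0] at hmem
        have hsplit : W.mode u' (-2) v'
            = ((∑ i ∈ Finset.range Kt', zchoose k (i + 1) •
                W.mode u' (((i + 1 : ℕ) : ℤ) - 2) v') + W.mode u' (-2) v')
              - ∑ i ∈ Finset.range Kt', zchoose k (i + 1) •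
                W.mode u' (((i + 1 : ℕ) : ℤ) - 2) v' := by abel
        rw [hsplit]
        refine Submodule.sub_mem _ (le_sup_right (α := Submodule ℂ V) hmem) ?_
        refine Submodule.sum_mem _ fun i _ => zsmul_mem ?_ _
        have hmemg := mode_mem_grading W hu' hv' (((i + 1 : ℕ) : ℤ) - 2)
        have hidx : k + l - (((i + 1 : ℕ) : ℤ) - 2) - 1 = n - ((i : ℤ) + 1) := by
          push_cast; omega
        rw [hidx] at hmemg
        exact ih (n - ((i : ℤ) + 1)) (by omega) hmemg
      intro x hx
      have hxT : x ∈ C2 ⊔ Submodule.span ℂ B' := hsup' ▸ Submodule.mem_top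
      obtain ⟨c, hc, b, hb, hcb⟩ := Submodule.mem_sup.mp hxT
      have hpx : vproj p hp n x = x := by
        rw [proj_of_mem p hp hx n, if_pos rfl]
      rw [← hpx, ← hcb, map_add]
      refine Submodule.add_mem _ ?_ ?_
      · -- vproj n c ∈ T for c ∈ C2
        have hC2le : C2 ≤ Submodule.comap (vproj p hp n) T := by
          rw [hC2def, Cspace, Submodule.span_le]
          rintro g ⟨u, v, rfl⟩
          simp only [SetLike.mem_coe, Submodule.mem_comap]
          have h2 : -((2 : ℕ) : ℤ) = -2 := by norm_num
          rw [h2]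
          have hexp : W.mode u (-2) v
              = ∑ k ∈ (vdec p hp u).support, ∑ l ∈ (vdec p hp v).support,
                  W.mode (vproj p hp k u) (-2) (vproj p hp l v) := by
            conv_lhs => rw [sum_proj p hp u, sum_proj p hp v]
            simp only [map_sum, Finset.sum_apply, LinearMap.sum_apply]
            exact Finset.sum_comm
          rw [hexp, map_sum]
          refine Submodule.sum_mem _ fun k _ => ?_
          rw [map_sum]
          refine Submodule.sum_mem _ fun l _ => ?_
          have hmemg := mode_mem_grading W (proj_mem p hp k u) (proj_mem p hp l v) (-2)
          have hidx : k + l - (-2) - 1 = k + l + 1 := by ring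
          rw [hidx] at hmemg
          rw [proj_of_mem p hp hmemg n]
          split_ifs with hcase
          · exact claim k l _ _ (proj_mem p hp k u) (proj_mem p hp l v) hcase.symm
          · exact Submodule.zero_mem T
        exact hC2le hc
      · exact le_sup_left (α := Submodule ℂ V)
          (proj_span_le p hp hB'hom n b hb)
  have hTtop : T = ⊤ := by
    rw [eq_top_iff, ← hp.submodule_iSup_eq_top]
    exact iSup_le fun n => main (n.toNat + 1) n (by omega)
  have hsupO : Ospace V W ⊔ Submodule.span ℂ B' = ⊤ := by
    rw [sup_comm]; exact hTtop
  have hmap2 : Submodule.map (Ospace V W).mkQ (Submodule.span ℂ B') = ⊤ :=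
    (Submodule.map_mkQ_eq_top _ _).mpr hsupO
  rw [Submodule.map_span] at hmap2
  exact Module.finite_def.mpr (Submodule.fg_def.mpr
    ⟨_, hB'fin.image _, hmap2⟩)

end VOAPaper
end

section
/- Let V be a vertex operator algebra of CFT-type and let X be a set of homogeneous representatives of a spanning set of V/C_2(V). Then V is spanned by elements u^{(1)}_{n_1} ⋯ u^{(r)}_{n_r} 1 with r ∈ ℕ, u^{(i)} ∈ X, and strictly increasing negative indices n_1 < n_2 < ⋯ < n_r < 0 (a difference-one condition). -/
open scoped BigOperators

namespace VOAPaper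

variable (V : Type) [AddCommGroup V] [Module ℂ V]

section Basics

lemma zchoose_zero (i : ℕ) : zchoose 0 i = if i = 0 then 1 else 0 := by
  simp [zchoose]
  cases i <;> simp [Nat.choose]

lemma zchoose_neg_one (i : ℕ) : zchoose (-1) i = (-1) ^ i := by
  have : ((i : ℤ) - (-1) - 1).toNat = i := by omega
  simp [zchoose, this]

lemma zchoose_neg_two (i : ℕ) : zchoose (-2) i = (-1) ^ i * ((i : ℤ) + 1) := by
  have h : ((i : ℤ) - (-2) - 1).toNat = i + 1 := by omega
  simp only [zchoose, if_neg (by omega : ¬ (0:ℤ) ≤ -2), h, Nat.choose_succ_self_right]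
  push_cast; ring

lemma zchoose_one_s9 (i : ℕ) : zchoose 1 i = if i = 0 then 1 else if i = 1 then 1 else 0 := by
  simp [zchoose]
  match i with
  | 0 => simp
  | 1 => simp
  | (n+2) => rw [Nat.choose_eq_zero_of_lt (by omega)]; simp

lemma negOnePow_neg_one : ((-1 : ℤ).negOnePow : ℤ) = -1 := by decide
lemma negOnePow_neg_two : ((-2 : ℤ).negOnePow : ℤ) = 1 := by decide
lemma negOnePow_zero' : ((0 : ℤ).negOnePow : ℤ) = 1 := by decide

variable {V : Type} [AddCommGroup V] [Module ℂ V]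

lemma finsum_eq_range_sum {M : Type*} [AddCommMonoid M] (f : ℕ → M) (n : ℕ)
    (h : ∀ i, n ≤ i → f i = 0) :
    ∑ᶠ i, f i = ∑ i ∈ Finset.range n, f i := by
  apply finsum_eq_finset_sum_of_support_subset
  intro i hi
  simp only [Function.mem_support] at hi
  simp only [Finset.coe_range, Set.mem_Iio]
  by_contra h'
  exact hi (h i (by omega))

namespace VertexAlg

variable (A : VertexAlg V)

lemma mode_zero (n : ℤ) (w : V) : A.mode 0 n w = 0 := by
  have : A.mode 0 = 0 := map_zero A.mode
  simp [this]

lemma mode_smul (c : ℂ) (u : V) (n : ℤ) (w : V) :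
    A.mode (c • u) n w = c • A.mode u n w := by
  have : A.mode (c • u) = c • A.mode u := map_smul A.mode c u
  simp [this]

lemma mode_add (u v : V) (n : ℤ) (w : V) :
    A.mode (u + v) n w = A.mode u n w + A.mode v n w := by
  have : A.mode (u + v) = A.mode u + A.mode v := map_add A.mode u v
  simp [this]

/-- upper bound on modes of u on v -/
lemma modes_bound (u v : V) : ∃ I : ℕ, ∀ i : ℕ, I ≤ i → A.mode u i v = 0 := by
  obtain ⟨N, hN⟩ := A.trunc u v
  exact ⟨N.toNat, fun i hi => hN i (by omega)⟩

/-- The commutator formula. -/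
lemma comm_formula (u v w : V) (m q : ℤ) :
    A.mode u m (A.mode v q w) - A.mode v q (A.mode u m w)
      = ∑ᶠ i : ℕ, zchoose m i • A.mode (A.mode u i v) (m + q - i) w := by
  have h := A.borcherds u v w 0 q m
  have hL : (∑ᶠ i : ℕ, zchoose m i • A.mode (A.mode u (0 + (i:ℕ)) v) (m + q - i) w)
      = ∑ᶠ i : ℕ, zchoose m i • A.mode (A.mode u i v) (m + q - i) w := by
    apply finsum_congr; intro i; norm_num
  have hR : (∑ᶠ i : ℕ, ((-1 : ℤ) ^ (i:ℕ) * zchoose 0 i) •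
      (A.mode u (0 + m - i) (A.mode v (q + i) w)
        - ((0:ℤ).negOnePow : ℤ) • A.mode v (0 + q - i) (A.mode u (m + i) w)))
      = A.mode u m (A.mode v q w) - A.mode v q (A.mode u m w) := by
    rw [finsum_eq_single _ 0]
    · norm_num [negOnePow_zero', zchoose_zero]
    · intro i hi
      simp [zchoose_zero, hi]
  rw [← hL, h, hR]

/-- The iterate formula. -/
lemma iterate_formula (u v w : V) (p q : ℤ) :
    A.mode (A.mode u p v) q w
      = ∑ᶠ i : ℕ, ((-1 : ℤ) ^ i * zchoose p i) •
          (A.mode u (p - i) (A.mode v (q + i) w)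
            - (p.negOnePow : ℤ) • A.mode v (p + q - i) (A.mode u i w)) := by
  have h := A.borcherds u v w p q 0
  have hL : (∑ᶠ i : ℕ, zchoose 0 i • A.mode (A.mode u (p + (i:ℕ)) v) (0 + q - i) w)
      = A.mode (A.mode u p v) q w := by
    rw [finsum_eq_single _ 0]
    · norm_num [zchoose_zero]
    · intro i hi
      simp [zchoose_zero, hi]
  have hR : (∑ᶠ i : ℕ, ((-1 : ℤ) ^ (i:ℕ) * zchoose p i) •
      (A.mode u (p + 0 - i) (A.mode v (q + i) w)
        - (p.negOnePow : ℤ) • A.mode v (p + q - i) (A.mode u (0 + i) w)))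
      = ∑ᶠ i : ℕ, ((-1 : ℤ) ^ i * zchoose p i) •
          (A.mode u (p - i) (A.mode v (q + i) w)
            - (p.negOnePow : ℤ) • A.mode v (p + q - i) (A.mode u i w)) := by
    apply finsum_congr; intro i; norm_num
  rw [← hL, h, hR]

/-- iterate formula specialized to `p = -1`. -/
lemma iterate_neg_one (u v w : V) (q : ℤ) :
    A.mode (A.mode u (-1) v) q w
      = ∑ᶠ i : ℕ, (A.mode u (-1 - i) (A.mode v (q + i) w)
            + A.mode v (-1 + q - i) (A.mode u i w)) := by
  rw [iterate_formula]
  apply finsum_congr; intro i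
  rw [zchoose_neg_one, negOnePow_neg_one, ← mul_pow]
  norm_num [sub_neg_eq_add]

/-- iterate formula specialized to `p = -2`. -/
lemma iterate_neg_two (u v w : V) (q : ℤ) :
    A.mode (A.mode u (-2) v) q w
      = ∑ᶠ i : ℕ, ((i : ℤ) + 1) •
          (A.mode u (-2 - i) (A.mode v (q + i) w)
            - A.mode v (-2 + q - i) (A.mode u i w)) := by
  rw [iterate_formula]
  apply finsum_congr; intro i
  rw [zchoose_neg_two, negOnePow_neg_two]
  rw [← mul_assoc, ← mul_pow]
  norm_num

end VertexAlg

end Basics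
section ApplyModes

variable {V : Type} [AddCommGroup V] [Module ℂ V] (A : VertexAlg V)

/-- `applyModes` as a linear map. -/
noncomputable def applyModesL : List (V × ℤ) → (V →ₗ[ℂ] V)
  | [] => LinearMap.id
  | p :: L => (A.mode p.1 p.2) ∘ₗ applyModesL L

@[simp] lemma applyModesL_nil : applyModesL A [] = LinearMap.id := rfl

@[simp] lemma applyModesL_cons (p : V × ℤ) (L : List (V × ℤ)) :
    applyModesL A (p :: L) = (A.mode p.1 p.2) ∘ₗ applyModesL A L := rfl

lemma applyModesL_apply (L : List (V × ℤ)) (w : V) :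
    applyModesL A L w = applyModes V A L w := by
  induction L with
  | nil => rfl
  | cons p L ih => simp [applyModes, ih]

lemma applyModes_append (L1 L2 : List (V × ℤ)) (w : V) :
    applyModes V A (L1 ++ L2) w = applyModes V A L1 (applyModes V A L2 w) := by
  induction L1 with
  | nil => rfl
  | cons p L ih => simp [applyModes, ih]

end ApplyModes

section Graded

open scoped DirectSum

variable {V : Type} [AddCommGroup V] [Module ℂ V] (W : VOA V)

/-- The decomposition equivalence. -/
noncomputable def decompE : V ≃ₗ[ℂ] (⨁ i : ℤ, W.grading i) :=
  (LinearEquiv.ofBijective (DirectSum.coeLinearMap W.grading) W.internal).symm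

/-- Projection onto the degree-`n` part, as an endomorphism of `V`. -/
noncomputable def gproj (n : ℤ) : V →ₗ[ℂ] V :=
  (W.grading n).subtype ∘ₗ (DirectSum.component ℂ ℤ (fun i => ↥(W.grading i)) n) ∘ₗ
    (decompE W).toLinearMap

lemma gproj_mem (n : ℤ) (v : V) : gproj W n v ∈ W.grading n := by
  simp only [gproj, LinearMap.coe_comp, Function.comp_apply, Submodule.coe_subtype]
  exact SetLike.coe_mem _

lemma gproj_of_mem {m n : ℤ} {v : V} (h : v ∈ W.grading m) :
    gproj W n v = if n = m then v else 0 := by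
  have hg : gproj W n v = ((decompE W v) n : V) := rfl
  by_cases hnm : n = m
  · subst hnm
    have h2 := W.internal.ofBijective_coeLinearMap_of_mem h
    rw [hg, if_pos rfl]
    show (((LinearEquiv.ofBijective (DirectSum.coeLinearMap W.grading) W.internal).symm v) n : V) = v
    rw [h2]
  · have h2 := W.internal.ofBijective_coeLinearMap_of_mem_ne (fun hh => hnm hh.symm) h
    rw [hg, if_neg hnm]
    show (((LinearEquiv.ofBijective (DirectSum.coeLinearMap W.grading) W.internal).symm v) n : V) = 0
    rw [h2]
    rfl

/-- Any vector decomposes as a finite sum of homogeneous pieces. -/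
lemma exists_homog_decomp (v : V) :
    ∃ f : ℤ →₀ V, (∀ i, f i ∈ W.grading i) ∧ (f.sum fun _ x => x) = v := by
  have hv : v ∈ iSup W.grading := by
    rw [W.internal.submodule_iSup_eq_top]; trivial
  exact (Submodule.mem_iSup_iff_exists_finsupp _ _).mp hv

/-- Membership in gradings from an `L0`-eigenvector equation. -/
lemma mem_grading_of_L0_eigen (x : V) (ν : ℤ)
    (h : W.mode W.ω 1 x = (ν : ℂ) • x) : x ∈ W.grading ν := by
  classical
  obtain ⟨f, hmem, hsum⟩ := exists_homog_decomp W x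
  -- apply L0 - ν to the decomposition
  have key : ∑ i ∈ f.support, ((i : ℂ) - ν) • f i = 0 := by
    have h1 : W.mode W.ω 1 x = ∑ i ∈ f.support, (i : ℂ) • f i := by
      rw [← hsum, Finsupp.sum, map_sum]
      exact Finset.sum_congr rfl fun i _ => W.L0_eigen i (f i) (hmem i)
    have h2 : (ν : ℂ) • x = ∑ i ∈ f.support, (ν : ℂ) • f i := by
      rw [← hsum, Finsupp.sum, Finset.smul_sum]
    calc ∑ i ∈ f.support, ((i : ℂ) - ν) • f i
        = ∑ i ∈ f.support, ((i : ℂ) • f i - (ν : ℂ) • f i) := by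
          exact Finset.sum_congr rfl fun i _ => sub_smul _ _ _
      _ = W.mode W.ω 1 x - (ν : ℂ) • x := by rw [Finset.sum_sub_distrib, h1, h2]
      _ = 0 := by rw [h, sub_self]
  have hzero : ∀ i : ℤ, i ≠ ν → f i = 0 := by
    intro i hi
    have hp := congrArg (gproj W i) key
    rw [map_sum, map_zero] at hp
    have hterm : ∀ j ∈ f.support, gproj W i (((j:ℂ) - ν) • f j)
        = if i = j then ((j:ℂ) - ν) • f j else 0 := by
      intro j _
      rw [map_smul, gproj_of_mem W (hmem j), smul_ite, smul_zero]
    rw [Finset.sum_congr rfl hterm, Finset.sum_ite_eq f.support i _] at hp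
    by_cases hif : i ∈ f.support
    · rw [if_pos hif] at hp
      have hiν : ((i : ℂ) - ν) ≠ 0 := by
        simp only [ne_eq, sub_eq_zero]
        exact_mod_cast fun hh => hi (by exact_mod_cast hh)
      exact (smul_eq_zero.mp hp).resolve_left hiν
    · exact Finsupp.notMem_support_iff.mp hif
  have : x = f ν := by
    rw [← hsum, Finsupp.sum, Finset.sum_eq_single ν]
    · intro i _ hi; exact hzero i hi
    · intro hν; exact Finsupp.notMem_support_iff.mp hν
  rw [this]
  exact hmem ν

/-- Compatibility of modes with the grading. -/
lemma mode_grading {a b : ℤ} {u w : V} (hu : u ∈ W.grading a) (hw : w ∈ W.grading b)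
    (n : ℤ) : W.mode u n w ∈ W.grading (a + b - n - 1) := by
  apply mem_grading_of_L0_eigen
  have hc := W.comm_formula W.ω u w 1 n
  have hsum : (∑ᶠ i : ℕ, zchoose 1 i • W.mode (W.mode W.ω i u) (1 + n - i) w)
      = W.mode (W.mode W.ω 0 u) (1 + n) w + W.mode (W.mode W.ω 1 u) n w := by
    rw [finsum_eq_range_sum _ 2 (fun i hi => by
      rw [zchoose_one_s9, if_neg (by omega), if_neg (by omega), zero_smul])]
    rw [Finset.sum_range_succ, Finset.sum_range_one]
    norm_num [zchoose_one_s9]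
  rw [hsum] at hc
  have h1 : W.mode (W.mode W.ω 0 u) (1 + n) w = (-(1 + n)) • W.mode u n w := by
    rw [W.Lneg1_deriv u (1 + n)]
    have he : (1 + n - 1 : ℤ) = n := by ring
    rw [he, LinearMap.smul_apply]
  have h2 : W.mode (W.mode W.ω 1 u) n w = (a : ℂ) • W.mode u n w := by
    rw [W.L0_eigen a u hu, VertexAlg.mode_smul]
  have h3 : W.mode W.ω 1 w = (b : ℂ) • w := W.L0_eigen b w hw
  have h4 : W.mode u n ((b : ℂ) • w) = (b : ℂ) • W.mode u n w := by
    exact map_smul (W.mode u n) _ _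
  have h5 : W.mode W.ω 1 (W.mode u n w)
      = (b : ℂ) • W.mode u n w + ((-(1 + n)) • W.mode u n w + (a : ℂ) • W.mode u n w) := by
    rw [h1, h2, h3, h4] at hc
    linear_combination (norm := module) hc
  rw [h5]
  have hz : (-(1 + n)) • W.mode u n w = ((-(1+n) : ℤ) : ℂ) • W.mode u n w := by
    rw [Int.cast_smul_eq_zsmul]
  rw [hz]
  push_cast
  module

end Graded
section Relations

variable {V : Type} [AddCommGroup V] [Module ℂ V] (A : VertexAlg V)

lemma support_finite_of_bound {M : Type*} [AddCommMonoid M] {f : ℕ → M} (I : ℕ)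
    (h : ∀ i, I ≤ i → f i = 0) : (Function.support f).Finite := by
  apply Set.Finite.subset (Finset.range I).finite_toSet
  intro i hi
  simp only [Function.mem_support] at hi
  simp only [Finset.coe_range, Set.mem_Iio]
  by_contra h'
  exact hi (h i (by omega))

/-- Truncated commutator relation. -/
lemma rel_comm (x y z : V) (k l : ℤ) :
    ∃ I : ℕ, A.mode x k (A.mode y l z)
      = A.mode y l (A.mode x k z)
        + ∑ i ∈ Finset.range I, zchoose k i • A.mode (A.mode x i y) (k + l - i) z := by
  obtain ⟨I, hI⟩ := A.modes_bound x y
  refine ⟨I, ?_⟩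
  have h := A.comm_formula x y z k l
  rw [finsum_eq_range_sum _ I (fun i hi => by
    rw [hI i hi, VertexAlg.mode_zero, smul_zero])] at h
  exact sub_eq_iff_eq_add'.mp h

/-- Truncated iterate relation for `p = -2`. -/
lemma rel_iter_neg_two (b c z : V) (q : ℤ) :
    ∃ I J : ℕ, A.mode (A.mode b (-2) c) q z
      = ∑ i ∈ Finset.range I, ((i:ℤ)+1) • A.mode b (-2-i) (A.mode c (q+i) z)
        - ∑ i ∈ Finset.range J, ((i:ℤ)+1) • A.mode c (q-2-i) (A.mode b i z) := by
  obtain ⟨N, hN⟩ := A.trunc c z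
  obtain ⟨J, hJ⟩ := A.modes_bound b z
  set F : ℕ → V := fun i => ((i:ℤ)+1) • A.mode b (-2-i) (A.mode c (q+i) z) with hF
  set G : ℕ → V := fun i => ((i:ℤ)+1) • A.mode c (q-2-i) (A.mode b i z) with hG
  have hFbd : ∀ i, (N - q).toNat ≤ i → F i = 0 := by
    intro i hi
    have h1 : A.mode c (q + i) z = 0 := hN _ (by omega)
    rw [hF]; simp [h1]
  have hGbd : ∀ i, J ≤ i → G i = 0 := by
    intro i hi
    rw [hG]; simp [hJ i hi]
  refine ⟨(N - q).toNat, J, ?_⟩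
  have h := A.iterate_neg_two b c z q
  have hsplit : (∑ᶠ i : ℕ, ((i:ℤ)+1) • (A.mode b (-2-i) (A.mode c (q+i) z)
        - A.mode c (-2+q-i) (A.mode b i z))) = (∑ᶠ i, F i) - ∑ᶠ i, G i := by
    have hc : ∀ i : ℕ, ((i:ℤ)+1) • (A.mode b (-2-i) (A.mode c (q+i) z)
        - A.mode c (-2+q-i) (A.mode b i z)) = F i - G i := by
      intro i
      rw [hF, hG, smul_sub]
      have : (-2 + q - (i:ℤ)) = q - 2 - i := by ring
      rw [this]
    rw [finsum_congr hc]
    exact finsum_sub_distrib (support_finite_of_bound _ hFbd) (support_finite_of_bound _ hGbd)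
  rw [h, hsplit, finsum_eq_range_sum F _ hFbd, finsum_eq_range_sum G _ hGbd]

/-- Truncated iterate relation for `p = -1`. -/
lemma rel_iter_neg_one (x y z : V) (q : ℤ) :
    ∃ I J : ℕ, (∀ i : ℕ, I ≤ i → A.mode x (-1-i) (A.mode y (q+i) z) = 0) ∧
    A.mode (A.mode x (-1) y) q z
      = ∑ i ∈ Finset.range I, A.mode x (-1-i) (A.mode y (q+i) z)
        + ∑ i ∈ Finset.range J, A.mode y (q-1-i) (A.mode x i z) := by
  obtain ⟨N, hN⟩ := A.trunc y z
  obtain ⟨J, hJ⟩ := A.modes_bound x z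
  set F : ℕ → V := fun i => A.mode x (-1-i) (A.mode y (q+i) z) with hF
  set G : ℕ → V := fun i => A.mode y (q-1-i) (A.mode x i z) with hG
  have hFbd : ∀ i, (N - q).toNat ≤ i → F i = 0 := by
    intro i hi
    have h1 : A.mode y (q + i) z = 0 := hN _ (by omega)
    rw [hF]; simp [h1]
  have hGbd : ∀ i, J ≤ i → G i = 0 := by
    intro i hi
    rw [hG]; simp [hJ i hi]
  refine ⟨(N - q).toNat, J, fun i hi => by simpa [hF] using hFbd i hi, ?_⟩
  have h := A.iterate_neg_one x y z q
  have hsplit : (∑ᶠ i : ℕ, (A.mode x (-1-i) (A.mode y (q+i) z)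
        + A.mode y (-1+q-i) (A.mode x i z))) = (∑ᶠ i, F i) + ∑ᶠ i, G i := by
    have hc : ∀ i : ℕ, (A.mode x (-1-i) (A.mode y (q+i) z)
        + A.mode y (-1+q-i) (A.mode x i z)) = F i + G i := by
      intro i
      rw [hF, hG]
      have : (-1 + q - (i:ℤ)) = q - 1 - i := by ring
      rw [this]
    rw [finsum_congr hc]
    exact finsum_add_distrib (support_finite_of_bound _ hFbd) (support_finite_of_bound _ hGbd)
  rw [h, hsplit, finsum_eq_range_sum F _ hFbd, finsum_eq_range_sum G _ hGbd]

/-- The diagonal (Gaberdiel–Neitzke) relation: solve for `x_{-m} y_{-m} z` inside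
the iterate relation for `(x_{-1}y)_{-2m+1}`. -/
lemma rel_diag (x y z : V) (m : ℤ) (hm : 1 ≤ m) :
    ∃ I J : ℕ, (m.toNat - 1) < I ∧
    A.mode x (-m) (A.mode y (-m) z)
      = A.mode (A.mode x (-1) y) (-2*m+1) z
        - ∑ i ∈ (Finset.range I).erase (m.toNat - 1),
            A.mode x (-1-i) (A.mode y (-2*m+1+i) z)
        - ∑ i ∈ Finset.range J, A.mode y (-2*m-i) (A.mode x i z) := by
  obtain ⟨I, J, hIbd, h⟩ := rel_iter_neg_one A x y z (-2*m+1)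
  set m₀ : ℕ := m.toNat - 1 with hm₀
  set I' : ℕ := max I (m₀ + 1) with hI'
  refine ⟨I', J, by omega, ?_⟩
  set F : ℕ → V := fun i => A.mode x (-1-i) (A.mode y (-2*m+1+i) z) with hF
  have hext : ∑ i ∈ Finset.range I', F i = ∑ i ∈ Finset.range I, F i := by
    symm
    apply Finset.sum_subset
    · apply Finset.range_subset_range.mpr; omega
    · intro i _ hi
      simp only [Finset.mem_range, not_lt] at hi
      exact hIbd i (by omega)
  have hsplit : ∑ i ∈ Finset.range I', F i
      = F m₀ + ∑ i ∈ (Finset.range I').erase m₀, F i := by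
    rw [Finset.add_sum_erase _ F (by simp [Finset.mem_range]; omega)]
  have hFm : F m₀ = A.mode x (-m) (A.mode y (-m) z) := by
    show A.mode x (-1-(m₀:ℤ)) (A.mode y (-2*m+1+(m₀:ℤ)) z) = _
    have h1 : (-1 - (m₀ : ℤ)) = -m := by omega
    have h2 : (-2*m+1+(m₀ : ℤ)) = -m := by omega
    rw [h1, h2]
  have hJ' : ∀ i : ℕ, ((-2*m+1) - 1 - (i:ℤ)) = -2*m - i := by intro i; ring
  have h' : A.mode (A.mode x (-1) y) (-2*m+1) z
      = (A.mode x (-m) (A.mode y (-m) z)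
          + ∑ i ∈ (Finset.range I').erase m₀, F i)
        + ∑ i ∈ Finset.range J, A.mode y (-2*m-i) (A.mode x i z) := by
    rw [← hFm, ← hsplit, hext, h]
    congr 1
    apply Finset.sum_congr rfl
    intro i _
    rw [hJ' i]
  rw [h']
  abel

end Relations
section Words

variable {V : Type} [AddCommGroup V] [Module ℂ V]

/-- A letter: vector, declared weight, mode index, and an `in X` flag. -/
structure Ltr (V : Type) where
  v : V
  d : ℤ
  n : ℤ
  xf : Bool

variable (W : VOA V) (X : Set V)

def toML : List (Ltr V) → List (V × ℤ) := List.map fun l => (l.v, l.n)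

def wval (w : List (Ltr V)) : V := applyModes V W.toVertexAlg (toML w) W.vac

def GoodL (l : Ltr V) : Prop := l.v ∈ W.grading l.d ∧ (l.xf = true → l.v ∈ X)

@[simp] lemma toML_nil : toML ([] : List (Ltr V)) = [] := rfl
@[simp] lemma toML_cons (l : Ltr V) (t : List (Ltr V)) :
    toML (l :: t) = (l.v, l.n) :: toML t := rfl
@[simp] lemma toML_append (u w : List (Ltr V)) : toML (u ++ w) = toML u ++ toML w :=
  List.map_append

@[simp] lemma wval_nil : wval W ([] : List (Ltr V)) = W.vac := rfl

lemma wval_cons (l : Ltr V) (t : List (Ltr V)) :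
    wval W (l :: t) = W.mode l.v l.n (wval W t) := rfl

lemma wval_append (u w : List (Ltr V)) :
    wval W (u ++ w) = applyModesL W.toVertexAlg (toML u) (wval W w) := by
  rw [wval, toML_append, applyModes_append, applyModesL_apply]
  rfl

/-- measure components -/
def m1 (w : List (Ltr V)) : ℕ := (w.map fun l => l.d.toNat).sum
def m2 (w : List (Ltr V)) : ℕ := w.length
def m3 (w : List (Ltr V)) : ℕ := w.countP (fun l => !l.xf)
noncomputable def mcls (w : List (Ltr V)) : ℕ :=
  haveI := Classical.propDecidable
  if (∀ l ∈ w, l.n < 0) then 1 else 0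
def m4 : List (Ltr V) → ℕ
  | [] => 0
  | l :: t => m4 t + if 0 ≤ l.n then t.length else 0
def wsum (w : List (Ltr V)) : ℤ := (w.map fun l => l.d - l.n - 1).sum
def sq (w : List (Ltr V)) : ℤ := (w.map fun l => l.n ^ 2).sum
noncomputable def m5 (w : List (Ltr V)) : ℕ :=
  ((w.length : ℤ) * (wsum w + 1) ^ 2 - sq w).toNat
def m6 : List (Ltr V) → ℕ
  | [] => 0
  | l :: t => m6 t + t.countP (fun l' => decide (l'.n ≤ l.n))

abbrev M7 : Type := Lex (ℕ × Lex (ℕ × Lex (ℕ × Lex (ℕ × Lex (ℕ × Lex (ℕ × ℕ))))))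

noncomputable def μm (w : List (Ltr V)) : M7 :=
  toLex (m1 w, toLex (m2 w, toLex (m3 w, toLex (mcls w, toLex (m4 w,
    toLex (m5 w, m6 w))))))

lemma m7wf : WellFounded ((· < ·) : M7 → M7 → Prop) := wellFounded_lt

/-- append lemmas -/
lemma m1_append (u w : List (Ltr V)) : m1 (u ++ w) = m1 u + m1 w := by
  simp [m1]
lemma m2_append (u w : List (Ltr V)) : m2 (u ++ w) = m2 u + m2 w := by
  simp [m2]
lemma m3_append (u w : List (Ltr V)) : m3 (u ++ w) = m3 u + m3 w := by
  simp [m3, List.countP_append]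
lemma wsum_append (u w : List (Ltr V)) : wsum (u ++ w) = wsum u + wsum w := by
  simp [wsum]
lemma sq_append (u w : List (Ltr V)) : sq (u ++ w) = sq u + sq w := by
  simp [sq]
lemma m4_append (u w : List (Ltr V)) :
    m4 (u ++ w) = m4 u + m4 w + (u.countP fun l => decide (0 ≤ l.n)) * w.length := by
  induction u with
  | nil => simp [m4]
  | cons l t ih =>
      have he : (l :: t) ++ w = l :: (t ++ w) := rfl
      rw [he, m4, m4, ih, List.countP_cons, List.length_append]
      by_cases h : 0 ≤ l.n
      · rw [if_pos h, if_pos h, if_pos (by simpa using h)]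
        ring
      · rw [if_neg h, if_neg h, if_neg (by simpa using h)]
        ring

def crossCnt (u w : List (Ltr V)) : ℕ :=
  (u.map fun l => w.countP (fun l' => decide (l'.n ≤ l.n))).sum

lemma m6_append (u w : List (Ltr V)) :
    m6 (u ++ w) = m6 u + m6 w + crossCnt u w := by
  induction u with
  | nil => simp [m6, crossCnt]
  | cons l t ih =>
      have ih' := ih
      simp only [crossCnt] at ih'
      have he : (l :: t) ++ w = l :: (t ++ w) := rfl
      rw [he, m6, m6]
      simp only [crossCnt, List.map_cons, List.sum_cons, List.countP_append, ih']
      omega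

lemma mcls_append (u w : List (Ltr V)) (hu : ∀ l ∈ u, l.n < 0) :
    mcls (u ++ w) = mcls w := by
  classical
  simp only [mcls]
  by_cases h : ∀ l ∈ w, l.n < 0
  · rw [if_pos (by intro l hl; rcases List.mem_append.mp hl with h'|h'; exacts [hu l h', h l h']), if_pos h]
  · rw [if_neg (by intro hc; exact h fun l hl => hc l (List.mem_append.mpr (Or.inr hl))), if_neg h]

/-- The master inequality for the lexicographic measure. -/
lemma μm_lt_of {w w' : List (Ltr V)}
    (h : m1 w' < m1 w ∨ (m1 w' = m1 w ∧ (m2 w' < m2 w ∨ (m2 w' = m2 w ∧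
      (m3 w' < m3 w ∨ (m3 w' = m3 w ∧ (mcls w' < mcls w ∨ (mcls w' = mcls w ∧
      (m4 w' < m4 w ∨ (m4 w' = m4 w ∧ (m5 w' < m5 w ∨ (m5 w' = m5 w ∧
      m6 w' < m6 w)))))))))))) : μm w' < μm w := by
  simp only [μm, Prod.Lex.lt_iff]
  tauto

end Words

section Splits

variable {α : Type*}

lemma split_last (P : α → Prop) (w : List α) (h : ∃ l ∈ w, P l) :
    ∃ u l t, w = u ++ l :: t ∧ P l ∧ ∀ x ∈ t, ¬ P x := by
  classical
  induction w with
  | nil => simp at h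
  | cons a w' ih =>
      by_cases h' : ∃ l ∈ w', P l
      · obtain ⟨u, l, t, rfl, hP, hT⟩ := ih h'
        exact ⟨a :: u, l, t, rfl, hP, hT⟩
      · have hPa : P a := by
          obtain ⟨l, hl, hPl⟩ := h
          rcases List.mem_cons.mp hl with rfl | hl'
          · exact hPl
          · exact absurd ⟨l, hl', hPl⟩ h'
        exact ⟨[], a, w', rfl, hPa, fun x hx hPx => h' ⟨x, hx, hPx⟩⟩

lemma split_first (P : α → Prop) (w : List α) (h : ∃ l ∈ w, P l) :
    ∃ u l t, w = u ++ l :: t ∧ P l ∧ ∀ x ∈ u, ¬ P x := by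
  classical
  induction w with
  | nil => simp at h
  | cons a w' ih =>
      by_cases hPa : P a
      · exact ⟨[], a, w', rfl, hPa, by simp⟩
      · have h' : ∃ l ∈ w', P l := by
          obtain ⟨l, hl, hPl⟩ := h
          rcases List.mem_cons.mp hl with rfl | hl'
          · exact absurd hPl hPa
          · exact ⟨l, hl', hPl⟩
        obtain ⟨u, l, t, rfl, hP, hU⟩ := ih h'
        refine ⟨a :: u, l, t, rfl, hP, ?_⟩
        intro x hx
        rcases List.mem_cons.mp hx with rfl | hx'
        · exact hPa
        · exact hU x hx'

lemma split_chain (R : α → α → Prop) (w : List α) (h : ¬ w.Chain' R) :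
    ∃ u x y t, w = u ++ x :: y :: t ∧ ¬ R x y := by
  classical
  induction w with
  | nil => exact absurd List.isChain_nil h
  | cons a w' ih =>
      by_cases h' : w'.Chain' R
      · match w', h' with
        | [], _ => exact absurd (List.isChain_singleton a) h
        | b :: t, hbt =>
            refine ⟨[], a, b, t, rfl, fun hR => h ?_⟩
            exact List.isChain_cons_cons.mpr ⟨hR, hbt⟩
      · obtain ⟨u, x, y, t, rfl, hR⟩ := ih h'
        exact ⟨a :: u, x, y, t, rfl, hR⟩

end Splits
set_option linter.unusedSectionVars false

section Decomp

variable {V : Type} [AddCommGroup V] [Module ℂ V] (W : VOA V) (X : Set V)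

lemma zero_of_neg_grading {v : V} {d : ℤ} (h : v ∈ W.grading d) (hd : d < 0) : v = 0 := by
  rw [W.neg_bot d hd] at h
  simpa using h

lemma grading_zero_eq_smul_vac {v : V} (hv : v ∈ W.grading 0) : ∃ c : ℂ, v = c • W.vac := by
  rw [W.cft] at hv
  obtain ⟨c, hc⟩ := Submodule.mem_span_singleton.mp hv
  exact ⟨c, hc.symm⟩

lemma wval_grading (w : List (Ltr V)) (hg : ∀ l ∈ w, l.v ∈ W.grading l.d) :
    wval W w ∈ W.grading (wsum w) := by
  induction w with
  | nil =>
      have : wsum ([] : List (Ltr V)) = 0 := by simp [wsum]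
      rw [this]
      exact W.vac_grade
  | cons l t ih =>
      have h1 := mode_grading W (hg l (List.mem_cons_self))
        (ih (fun x hx => hg x (List.mem_cons_of_mem l hx))) l.n
      have h2 : l.d + wsum t - l.n - 1 = wsum (l :: t) := by
        simp [wsum]; ring
      rw [h2] at h1
      exact h1

def XPart (α : ℤ) : Submodule ℂ V :=
  Submodule.span ℂ {x | x ∈ X ∧ x ∈ W.grading α}

def C2Part (α : ℤ) : Submodule ℂ V :=
  Submodule.span ℂ {z | ∃ β γ b c, 1 ≤ β ∧ 0 ≤ γ ∧ β + γ + 1 = α ∧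
    b ∈ W.grading β ∧ c ∈ W.grading γ ∧ z = W.mode b (-2) c}

lemma mode_vac_smul (c : ℂ) (n : ℤ) (x : V) :
    W.mode (c • W.vac) n x = c • (if n = -1 then x else 0) := by
  rw [VertexAlg.mode_smul, W.vac_mode]

lemma decomp_grading (wt : V → ℤ) (hhom : ∀ u ∈ X, u ∈ W.grading (wt u))
    (hspan : Submodule.span ℂ ((Cspace V W.toVertexAlg 2).mkQ '' X) = ⊤)
    (α : ℤ) : W.grading α ≤ XPart W X α ⊔ C2Part W α := by
  intro a ha
  -- split `a` as span-X part plus C₂ part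
  have hsplit : ∃ ξ ∈ Submodule.span ℂ X, a - ξ ∈ Cspace V W.toVertexAlg 2 := by
    have h1 : (Cspace V W.toVertexAlg 2).mkQ a ∈
        Submodule.span ℂ ((Cspace V W.toVertexAlg 2).mkQ '' X) := by
      rw [hspan]; trivial
    rw [Submodule.span_image] at h1
    obtain ⟨ξ, hξ, hmk⟩ := h1
    refine ⟨ξ, hξ, ?_⟩
    have : (Cspace V W.toVertexAlg 2).mkQ (a - ξ) = 0 := by
      rw [map_sub, hmk, sub_self]
    rwa [← Submodule.ker_mkQ (Cspace V W.toVertexAlg 2), LinearMap.mem_ker]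
  obtain ⟨ξ, hξ, hc⟩ := hsplit
  have hXp : gproj W α ξ ∈ XPart W X α := by
    have : Submodule.span ℂ X ≤ Submodule.comap (gproj W α) (XPart W X α) := by
      rw [Submodule.span_le]
      intro x hx
      simp only [Set.mem_setOf_eq, SetLike.mem_coe, Submodule.mem_comap]
      rw [gproj_of_mem W (hhom x hx)]
      by_cases h : α = wt x
      · rw [if_pos h]
        exact Submodule.subset_span ⟨hx, h ▸ hhom x hx⟩
      · rw [if_neg h]; exact Submodule.zero_mem _
    exact this hξ
  have hC2 : gproj W α (a - ξ) ∈ C2Part W α := by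
    have hgen : Cspace V W.toVertexAlg 2 ≤ Submodule.comap (gproj W α) (C2Part W α) := by
      rw [Cspace, Submodule.span_le]
      rintro z ⟨u, v, rfl⟩
      simp only [SetLike.mem_coe, Submodule.mem_comap]
      have h2 : -((2:ℕ):ℤ) = (-2 : ℤ) := by norm_num
      rw [h2]
      obtain ⟨fu, hfu, hfus⟩ := exists_homog_decomp W u
      obtain ⟨fv, hfv, hfvs⟩ := exists_homog_decomp W v
      have hexp : W.mode u (-2) v
          = ∑ β ∈ fu.support, ∑ γ ∈ fv.support, W.mode (fu β) (-2) (fv γ) := by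
        rw [← hfus, ← hfvs, Finsupp.sum, Finsupp.sum]
        have hu : W.mode (∑ β ∈ fu.support, fu β) = ∑ β ∈ fu.support, W.mode (fu β) :=
          map_sum W.toVertexAlg.mode _ _
        rw [hu]
        simp only [Finset.sum_apply, LinearMap.coe_sum]
        apply Finset.sum_congr rfl
        intro β _
        exact map_sum (W.mode (fu β) (-2)) _ _
      rw [hexp, map_sum]
      apply Submodule.sum_mem
      intro β _
      rw [map_sum]
      apply Submodule.sum_mem
      intro γ _
      have hm := mode_grading W (hfu β) (hfv γ) (-2)
      rw [gproj_of_mem W hm]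
      by_cases hα : α = β + γ - (-2) - 1
      · rw [if_pos hα]
        by_cases hγ : 0 ≤ γ
        · by_cases hβ : 1 ≤ β
          · apply Submodule.subset_span
            exact ⟨β, γ, fu β, fv γ, hβ, hγ, by omega, hfu β, hfv γ, rfl⟩
          · by_cases hβ0 : β = 0
            · subst hβ0
              obtain ⟨cc, hcc⟩ := grading_zero_eq_smul_vac W (hfu 0)
              rw [hcc, mode_vac_smul, if_neg (by norm_num), smul_zero]
              exact Submodule.zero_mem _
            · have : fu β = 0 := zero_of_neg_grading W (hfu β) (by omega)
              rw [this, VertexAlg.mode_zero]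
              exact Submodule.zero_mem _
        · have : fv γ = 0 := zero_of_neg_grading W (hfv γ) (by omega)
          rw [this, map_zero]
          exact Submodule.zero_mem _
      · rw [if_neg hα]; exact Submodule.zero_mem _
    exact hgen hc
  have ha' : gproj W α a = a := by
    rw [gproj_of_mem W ha, if_pos rfl]
  have : a = gproj W α ξ + gproj W α (a - ξ) := by
    rw [← map_add, add_sub_cancel, ha']
  rw [this]
  exact Submodule.add_mem _ (Submodule.mem_sup_left hXp) (Submodule.mem_sup_right hC2)

end Decomp
set_option linter.unusedSectionVars false

section Helpers

variable {V : Type} [AddCommGroup V] [Module ℂ V] (W : VOA V) (X : Set V)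

/-- `mode` in its first argument, as a linear map. -/
noncomputable def modeAt (A : VertexAlg V) (n : ℤ) (z : V) : V →ₗ[ℂ] V where
  toFun := fun a => A.mode a n z
  map_add' := by intro a b; exact VertexAlg.mode_add A a b n z
  map_smul' := by intro c a; exact VertexAlg.mode_smul A c a n z

@[simp] lemma modeAt_apply (A : VertexAlg V) (n : ℤ) (z a : V) :
    modeAt A n z a = A.mode a n z := rfl

lemma wval_zero_of_zero_letter (w : List (Ltr V)) (h : ∃ l ∈ w, l.v = 0) :
    wval W w = 0 := by
  induction w with
  | nil => simp at h
  | cons a t ih =>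
      rw [wval_cons]
      rcases h with ⟨l, hl, hv⟩
      rcases List.mem_cons.mp hl with rfl | hl'
      · rw [hv, VertexAlg.mode_zero]
      · rw [ih ⟨l, hl', hv⟩, map_zero]

@[simp] lemma m1_cons (l : Ltr V) (t : List (Ltr V)) : m1 (l :: t) = l.d.toNat + m1 t := by
  simp [m1]
@[simp] lemma m2_cons (l : Ltr V) (t : List (Ltr V)) : m2 (l :: t) = 1 + m2 t := by
  simp [m2]; omega
@[simp] lemma m3_cons (l : Ltr V) (t : List (Ltr V)) :
    m3 (l :: t) = m3 t + (if l.xf = false then 1 else 0) := by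
  simp only [m3, List.countP_cons]
  cases hx : l.xf <;> simp [hx]
@[simp] lemma wsum_cons (l : Ltr V) (t : List (Ltr V)) :
    wsum (l :: t) = (l.d - l.n - 1) + wsum t := by simp [wsum]
@[simp] lemma sq_cons (l : Ltr V) (t : List (Ltr V)) :
    sq (l :: t) = l.n ^ 2 + sq t := by simp [sq]
lemma m4_cons (l : Ltr V) (t : List (Ltr V)) :
    m4 (l :: t) = m4 t + if 0 ≤ l.n then t.length else 0 := rfl
lemma m6_cons (l : Ltr V) (t : List (Ltr V)) :
    m6 (l :: t) = m6 t + t.countP (fun l' => decide (l'.n ≤ l.n)) := rfl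

lemma m4_allneg (w : List (Ltr V)) (h : ∀ l ∈ w, l.n < 0) : m4 w = 0 := by
  induction w with
  | nil => rfl
  | cons l t ih =>
      rw [m4_cons, ih (fun x hx => h x (List.mem_cons_of_mem l hx)),
        if_neg (by have := h l (List.mem_cons_self); omega)]

lemma mcls_eq_zero (w : List (Ltr V)) (h : ∃ l ∈ w, 0 ≤ l.n) : mcls w = 0 := by
  classical
  rw [mcls, if_neg]
  intro hc
  obtain ⟨l, hl, hn⟩ := h
  exact absurd (hc l hl) (by omega)

lemma mcls_eq_one (w : List (Ltr V)) (h : ∀ l ∈ w, l.n < 0) : mcls w = 1 := by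
  classical
  rw [mcls, if_pos h]

lemma crossCnt_congr (u : List (Ltr V)) (a b : List (Ltr V))
    (h : ∀ p : Ltr V → Bool, a.countP p = b.countP p) : crossCnt u a = crossCnt u b := by
  unfold crossCnt
  congr 1
  apply List.map_congr_left
  intro l _
  exact h _

lemma countP_swap (x y : Ltr V) (t : List (Ltr V)) (p : Ltr V → Bool) :
    (x :: y :: t).countP p = (y :: x :: t).countP p := by
  simp only [List.countP_cons]
  omega

/-- bound on indices of an all-negative word -/
lemma neg_word_wsum_nonneg (w : List (Ltr V)) (hneg : ∀ l ∈ w, l.n < 0)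
    (hd : ∀ l ∈ w, 1 ≤ l.d) : 0 ≤ wsum w := by
  induction w with
  | nil => simp [wsum]
  | cons l t ih =>
      rw [wsum_cons]
      have h1 := hneg l (List.mem_cons_self)
      have h2 := hd l (List.mem_cons_self)
      have h3 := ih (fun x hx => hneg x (List.mem_cons_of_mem l hx))
        (fun x hx => hd x (List.mem_cons_of_mem l hx))
      omega

lemma neg_word_idx_bound (w : List (Ltr V)) (hneg : ∀ l ∈ w, l.n < 0)
    (hd : ∀ l ∈ w, 1 ≤ l.d) : ∀ l ∈ w, -(wsum w) ≤ l.n := by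
  induction w with
  | nil => simp
  | cons a t ih =>
      intro l hl
      have ha1 := hneg a (List.mem_cons_self)
      have ha2 := hd a (List.mem_cons_self)
      have ht : 0 ≤ wsum t := neg_word_wsum_nonneg t
        (fun x hx => hneg x (List.mem_cons_of_mem a hx))
        (fun x hx => hd x (List.mem_cons_of_mem a hx))
      rcases List.mem_cons.mp hl with rfl | hl'
      · rw [wsum_cons]; omega
      · have := ih (fun x hx => hneg x (List.mem_cons_of_mem a hx))
          (fun x hx => hd x (List.mem_cons_of_mem a hx)) l hl'
        rw [wsum_cons]; omega

lemma sq_le_of_bound (B : ℤ) (w : List (Ltr V)) (h : ∀ l ∈ w, l.n ^ 2 ≤ B) :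
    sq w ≤ (w.length : ℤ) * B := by
  induction w with
  | nil => simp [sq]
  | cons a t ih =>
      rw [sq_cons]
      have h1 := h a (List.mem_cons_self)
      have h2 := ih (fun x hx => h x (List.mem_cons_of_mem a hx))
      simp only [List.length_cons]
      push_cast
      linarith

lemma neg_word_sq_lt (w : List (Ltr V)) (hne : w ≠ []) (hneg : ∀ l ∈ w, l.n < 0)
    (hd : ∀ l ∈ w, 1 ≤ l.d) : sq w < (w.length : ℤ) * (wsum w + 1) ^ 2 := by
  have hB := neg_word_idx_bound w hneg hd
  have hB0 := neg_word_wsum_nonneg w hneg hd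
  have hlen : 1 ≤ w.length := by
    cases w
    · exact absurd rfl hne
    · simp
  have hsq : ∀ l ∈ w, l.n ^ 2 ≤ (wsum w + 1) ^ 2 - 1 := by
    intro l hl
    have h1 := hB l hl
    have h2 := hneg l hl
    nlinarith
  have := sq_le_of_bound ((wsum w + 1) ^ 2 - 1) w hsq
  have hl' : (1 : ℤ) ≤ (w.length : ℤ) := by exact_mod_cast hlen
  nlinarith

end Helpers
set_option linter.unusedSectionVars false
set_option maxHeartbeats 1000000

section MeasureLemmas

variable {V : Type} [AddCommGroup V] [Module ℂ V]

lemma μ_R0_lt (u t : List (Ltr V)) (l : Ltr V) (h : l.d.toNat = 0) :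
    μm (u ++ t) < μm (u ++ l :: t) := by
  apply μm_lt_of
  right
  constructor
  · rw [m1_append, m1_append, m1_cons, h]; omega
  · left
    rw [m2_append, m2_append, m2_cons]
    omega

lemma μ_X_lt (u t : List (Ltr V)) (l l' : Ltr V) (hd : l'.d = l.d)
    (hf : l.xf = false) (hf' : l'.xf = true) :
    μm (u ++ l' :: t) < μm (u ++ l :: t) := by
  apply μm_lt_of
  right
  refine ⟨by rw [m1_append, m1_append, m1_cons, m1_cons, hd], ?_⟩
  right
  refine ⟨by rw [m2_append, m2_append, m2_cons, m2_cons], ?_⟩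
  left
  rw [m3_append, m3_append, m3_cons, m3_cons, hf, hf']
  simp

lemma μ_split_lt (u t : List (Ltr V)) (a b c : Ltr V)
    (h : b.d.toNat + c.d.toNat < a.d.toNat) :
    μm (u ++ b :: c :: t) < μm (u ++ a :: t) := by
  apply μm_lt_of
  left
  rw [m1_append, m1_append, m1_cons, m1_cons, m1_cons]
  omega

lemma μ_corr_lt (u t : List (Ltr V)) (x y nl : Ltr V)
    (h : nl.d.toNat < x.d.toNat + y.d.toNat) :
    μm (u ++ nl :: t) < μm (u ++ x :: y :: t) := by
  apply μm_lt_of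
  left
  rw [m1_append, m1_append, m1_cons, m1_cons, m1_cons]
  omega

lemma μ_merge_lt (u t : List (Ltr V)) (x y nl : Ltr V)
    (h : nl.d.toNat = x.d.toNat + y.d.toNat) :
    μm (u ++ nl :: t) < μm (u ++ x :: y :: t) := by
  apply μm_lt_of
  right
  refine ⟨by rw [m1_append, m1_append, m1_cons, m1_cons, m1_cons]; omega, ?_⟩
  left
  rw [m2_append, m2_append, m2_cons, m2_cons, m2_cons]
  omega

lemma μ_swap_R2 (u t : List (Ltr V)) (x y : Ltr V) (hx : 0 ≤ x.n) (hy : y.n < 0) :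
    μm (u ++ y :: x :: t) < μm (u ++ x :: y :: t) := by
  apply μm_lt_of
  right
  refine ⟨by rw [m1_append, m1_append, m1_cons, m1_cons, m1_cons, m1_cons]; try omega, ?_⟩
  right
  refine ⟨by rw [m2_append, m2_append, m2_cons, m2_cons, m2_cons, m2_cons]; try omega, ?_⟩
  right
  refine ⟨by
    rw [m3_append, m3_append, m3_cons, m3_cons, m3_cons, m3_cons]; try omega, ?_⟩
  right
  refine ⟨?_, ?_⟩
  · rw [mcls_eq_zero _ ⟨x, by simp, hx⟩, mcls_eq_zero _ ⟨x, by simp, hx⟩]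
  left
  rw [m4_append, m4_append, m4_cons, m4_cons, m4_cons, m4_cons,
    if_pos hx, if_pos hx, if_neg (by omega), if_neg (by omega)]
  simp only [List.length_cons]
  omega

lemma μ_swap_R3 (u t : List (Ltr V)) (x y : Ltr V)
    (hall : ∀ l ∈ u ++ x :: y :: t, l.n < 0) (hyx : y.n < x.n) :
    μm (u ++ y :: x :: t) < μm (u ++ x :: y :: t) := by
  have hall' : ∀ l ∈ u ++ y :: x :: t, l.n < 0 := by
    intro l hl
    apply hall
    simp only [List.mem_append, List.mem_cons] at hl ⊢
    tauto
  apply μm_lt_of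
  right
  refine ⟨by rw [m1_append, m1_append, m1_cons, m1_cons, m1_cons, m1_cons]; try omega, ?_⟩
  right
  refine ⟨by rw [m2_append, m2_append, m2_cons, m2_cons, m2_cons, m2_cons]; try omega, ?_⟩
  right
  refine ⟨by rw [m3_append, m3_append, m3_cons, m3_cons, m3_cons, m3_cons]; try omega, ?_⟩
  right
  refine ⟨by rw [mcls_eq_one _ hall', mcls_eq_one _ hall], ?_⟩
  right
  refine ⟨by rw [m4_allneg _ hall', m4_allneg _ hall], ?_⟩
  right
  constructor
  · unfold m5
    rw [wsum_append, wsum_append, wsum_cons, wsum_cons, wsum_cons, wsum_cons,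
      sq_append, sq_append, sq_cons, sq_cons, sq_cons, sq_cons]
    simp only [List.length_append, List.length_cons]
    ring_nf
  · rw [m6_append, m6_append, m6_cons, m6_cons, m6_cons, m6_cons,
      crossCnt_congr u _ _ (fun p => countP_swap y x t p),
      List.countP_cons, List.countP_cons]
    have h1 : decide (y.n ≤ x.n) = true := by simpa using le_of_lt hyx
    have h2 : decide (x.n ≤ y.n) = false := by simp; omega
    simp only [h1, h2, if_pos, if_neg]
    simp
    omega

lemma μ_diag_pair_lt (u t : List (Ltr V)) (x y : Ltr V) (m : ℤ) (i : ℕ)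
    (hm : 1 ≤ m) (hxn : x.n = -m) (hyn : y.n = -m) (hi : (i : ℤ) ≠ m - 1)
    (hall : ∀ l ∈ u ++ x :: y :: t, l.n < 0)
    (hd1 : ∀ l ∈ u ++ x :: y :: t, 1 ≤ l.d) :
    μm (u ++ {x with n := -1 - i} :: {y with n := -2*m+1+i} :: t)
      < μm (u ++ x :: y :: t) := by
  set x' : Ltr V := {x with n := -1 - i} with hx'
  set y' : Ltr V := {y with n := -2*m+1+i} with hy'
  have hm1 : m1 (u ++ x' :: y' :: t) = m1 (u ++ x :: y :: t) := by
    rw [m1_append, m1_append, m1_cons, m1_cons, m1_cons, m1_cons]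
  have hm2 : m2 (u ++ x' :: y' :: t) = m2 (u ++ x :: y :: t) := by
    rw [m2_append, m2_append, m2_cons, m2_cons, m2_cons, m2_cons]
  have hm3 : m3 (u ++ x' :: y' :: t) = m3 (u ++ x :: y :: t) := by
    rw [m3_append, m3_append, m3_cons, m3_cons, m3_cons, m3_cons]
  by_cases hneg : -2*m+1+(i:ℤ) < 0
  · -- all-negative case : spread strictly increases
    have hall' : ∀ l ∈ u ++ x' :: y' :: t, l.n < 0 := by
      intro l hl
      simp only [List.mem_append, List.mem_cons] at hl
      rcases hl with h | h | h | h
      · exact hall l (by simp [h])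
      · subst h; show -1 - (i:ℤ) < 0; omega
      · subst h; exact hneg
      · exact hall l (by simp [h])
    apply μm_lt_of
    right; refine ⟨hm1, ?_⟩
    right; refine ⟨hm2, ?_⟩
    right; refine ⟨hm3, ?_⟩
    right; refine ⟨by rw [mcls_eq_one _ hall', mcls_eq_one _ hall], ?_⟩
    right; refine ⟨by rw [m4_allneg _ hall', m4_allneg _ hall], ?_⟩
    left
    unfold m5
    have hws : wsum (u ++ x' :: y' :: t) = wsum (u ++ x :: y :: t) := by
      rw [wsum_append, wsum_append, wsum_cons, wsum_cons, wsum_cons, wsum_cons]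
      simp only [hx', hy', hxn, hyn]
      push_cast
      ring
    have hlen : (u ++ x' :: y' :: t).length = (u ++ x :: y :: t).length := by
      simp
    have hsq : sq (u ++ x :: y :: t) < sq (u ++ x' :: y' :: t) := by
      rw [sq_append, sq_append, sq_cons, sq_cons, sq_cons, sq_cons]
      simp only [hx', hy', hxn, hyn]
      have heq : (-1 - (i:ℤ)) ^ 2 + (-2*m+1+(i:ℤ)) ^ 2 - ((-m) ^ 2 + (-m) ^ 2)
          = 2 * ((i:ℤ) + 1 - m) ^ 2 := by ring
      have h0 : ((i:ℤ) + 1 - m) ≠ 0 := by omega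
      have hpos : 0 < 2 * ((i:ℤ) + 1 - m) ^ 2 := by positivity
      linarith
    have hbound : sq (u ++ x :: y :: t)
        < ((u ++ x :: y :: t).length : ℤ) * (wsum (u ++ x :: y :: t) + 1) ^ 2 :=
      neg_word_sq_lt _ (by simp) hall hd1
    rw [hws, hlen]
    omega
  · -- the new word has a nonnegative index
    apply μm_lt_of
    right; refine ⟨hm1, ?_⟩
    right; refine ⟨hm2, ?_⟩
    right; refine ⟨hm3, ?_⟩
    left
    rw [mcls_eq_one _ hall, mcls_eq_zero _ ⟨y', by simp, by show (0:ℤ) ≤ -2*m+1+i; omega⟩]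
    omega

lemma μ_diag_tail_lt (u t : List (Ltr V)) (x y : Ltr V) (m : ℤ) (i : ℕ)
    (hm : 1 ≤ m) (hall : ∀ l ∈ u ++ x :: y :: t, l.n < 0) :
    μm (u ++ {y with n := -2*m-i} :: {x with n := (i:ℤ)} :: t)
      < μm (u ++ x :: y :: t) := by
  have e1 : ({y with n := -2*m-(i:ℤ)} : Ltr V).d = y.d := rfl
  have e2 : ({x with n := (i:ℤ)} : Ltr V).d = x.d := rfl
  have e3 : ({y with n := -2*m-(i:ℤ)} : Ltr V).xf = y.xf := rfl
  have e4 : ({x with n := (i:ℤ)} : Ltr V).xf = x.xf := rfl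
  apply μm_lt_of
  right
  refine ⟨by rw [m1_append, m1_append, m1_cons, m1_cons, m1_cons, m1_cons, e1, e2]; omega, ?_⟩
  right
  refine ⟨by rw [m2_append, m2_append, m2_cons, m2_cons, m2_cons, m2_cons]; try omega, ?_⟩
  right
  refine ⟨by rw [m3_append, m3_append, m3_cons, m3_cons, m3_cons, m3_cons, e3, e4]; omega, ?_⟩
  left
  rw [mcls_eq_one _ hall, mcls_eq_zero _ ⟨{x with n := (i:ℤ)}, by simp, by positivity⟩]
  omega

end MeasureLemmas
set_option linter.unusedSectionVars false
set_option maxHeartbeats 2000000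

section Main

variable {V : Type} [AddCommGroup V] [Module ℂ V] (W : VOA V) (X : Set V)

/-- The span of the strict monomials. -/
noncomputable def SpanS : Submodule ℂ V :=
  Submodule.span ℂ { x | ∃ L : List (V × ℤ),
      (∀ p ∈ L, p.1 ∈ X) ∧
      L.Chain' (fun p q => p.2 < q.2) ∧
      (∀ p ∈ L, p.2 < 0) ∧
      x = applyModes V W.toVertexAlg L W.vac }

lemma zsmul_mem' (S : Submodule ℂ V) (n : ℤ) {x : V} (h : x ∈ S) : n • x ∈ S := by
  rw [← Int.cast_smul_eq_zsmul ℂ]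
  exact S.smul_mem _ h

theorem words_span (wt : V → ℤ) (hhom : ∀ u ∈ X, u ∈ W.grading (wt u))
    (hspan : Submodule.span ℂ ((Cspace V W.toVertexAlg 2).mkQ '' X) = ⊤) :
    ∀ w : List (Ltr V), (∀ l ∈ w, GoodL W X l) → wval W w ∈ SpanS W X := by
  have main : ∀ μ0 : M7, ∀ w : List (Ltr V), μm w = μ0 →
      (∀ l ∈ w, GoodL W X l) → wval W w ∈ SpanS W X := by
    intro μ0
    refine m7wf.induction
      (C := fun μ1 => ∀ w : List (Ltr V), μm w = μ1 →
        (∀ l ∈ w, GoodL W X l) → wval W w ∈ SpanS W X) μ0 ?_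
    intro μ1 IH w hμ hg
    subst hμ
    have IHw : ∀ w' : List (Ltr V), μm w' < μm w →
        (∀ l ∈ w', GoodL W X l) → wval W w' ∈ SpanS W X :=
      fun w' hlt hg' => IH (μm w') hlt w' rfl hg'
    clear IH
    -- CASE 1 : a letter of negative weight
    by_cases hz : ∃ l ∈ w, l.d < 0
    · obtain ⟨l, hl, hd⟩ := hz
      have hv : l.v = 0 := zero_of_neg_grading W (hg l hl).1 hd
      rw [wval_zero_of_zero_letter W w ⟨l, hl, hv⟩]
      exact zero_mem _
    push_neg at hz
    -- CASE 2 : a letter of weight zero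
    by_cases h0 : ∃ l ∈ w, l.d = 0
    · obtain ⟨u, l, t, rfl, hld, -⟩ := split_first (fun l : Ltr V => l.d = 0) w h0
      set Φ : V →ₗ[ℂ] V :=
        (applyModesL W.toVertexAlg (toML u)) ∘ₗ modeAt W.toVertexAlg l.n (wval W t) with hΦ
      have hval : wval W (u ++ l :: t) = Φ l.v := by
        rw [wval_append, wval_cons]
        rfl
      rw [hval]
      have hsub : W.grading 0 ≤ Submodule.comap Φ (SpanS W X) := by
        rw [W.cft, Submodule.span_le]
        rintro x hx
        simp only [Set.mem_singleton_iff] at hx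
        subst hx
        simp only [SetLike.mem_coe, Submodule.mem_comap]
        show applyModesL W.toVertexAlg (toML u) (W.mode W.vac l.n (wval W t)) ∈ SpanS W X
        rw [W.vac_mode]
        by_cases hn : l.n = -1
        · rw [if_pos hn, ← wval_append]
          refine IHw (u ++ t) (μ_R0_lt u t l (by omega)) ?_
          intro x hx
          rcases List.mem_append.mp hx with h | h
          · exact hg x (by simp [h])
          · exact hg x (by simp [h])
        · rw [if_neg hn, map_zero]
          exact zero_mem _
      have hl0 : l.v ∈ W.grading 0 := by
        have := (hg l (by simp)).1
        rwa [hld] at this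
      exact hsub hl0
    push_neg at h0
    have hd1 : ∀ l ∈ w, 1 ≤ l.d := by
      intro l hl
      have := hz l hl
      have := h0 l hl
      omega
    -- CASE 3 : a letter not in X
    by_cases hflag : ∃ l ∈ w, l.xf = false
    · obtain ⟨u, l, t, rfl, hlf, -⟩ := split_first (fun l : Ltr V => l.xf = false) w hflag
      have hgu : ∀ x ∈ u, GoodL W X x := fun x hx => hg x (by simp [hx])
      have hgt : ∀ x ∈ t, GoodL W X x := fun x hx => hg x (by simp [hx])
      set Φ : V →ₗ[ℂ] V :=
        (applyModesL W.toVertexAlg (toML u)) ∘ₗ modeAt W.toVertexAlg l.n (wval W t) with hΦ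
      have hval : wval W (u ++ l :: t) = Φ l.v := by
        rw [wval_append, wval_cons]; rfl
      rw [hval]
      have hmem : l.v ∈ W.grading l.d := (hg l (by simp)).1
      have hdec := decomp_grading W X wt hhom hspan l.d hmem
      have hsub : XPart W X l.d ⊔ C2Part W l.d ≤ Submodule.comap Φ (SpanS W X) := by
        apply sup_le
        · rw [XPart, Submodule.span_le]
          rintro x ⟨hxX, hxg⟩
          simp only [SetLike.mem_coe, Submodule.mem_comap]
          have hx' : Φ x = wval W (u ++ ⟨x, l.d, l.n, true⟩ :: t) := by
            rw [wval_append, wval_cons]; rfl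
          rw [hx']
          refine IHw _ (μ_X_lt u t l ⟨x, l.d, l.n, true⟩ rfl hlf rfl) ?_
          intro a ha
          rcases List.mem_append.mp ha with h | h
          · exact hgu a h
          · rcases List.mem_cons.mp h with rfl | h'
            · exact ⟨hxg, fun _ => hxX⟩
            · exact hgt a h'
        · rw [C2Part, Submodule.span_le]
          rintro z ⟨β, γ, b, c, hβ, hγ, hβγ, hbg, hcg, rfl⟩
          simp only [SetLike.mem_coe, Submodule.mem_comap]
          show applyModesL W.toVertexAlg (toML u)
            (W.mode (W.mode b (-2) c) l.n (wval W t)) ∈ SpanS W X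
          obtain ⟨I, J, hIJ⟩ := rel_iter_neg_two W.toVertexAlg b c (wval W t) l.n
          rw [hIJ, map_sub, map_sum, map_sum]
          apply sub_mem
          · apply Submodule.sum_mem
            intro i _
            rw [map_zsmul]
            apply zsmul_mem'
            have he : applyModesL W.toVertexAlg (toML u)
                (W.mode b (-2-i) (W.mode c (l.n+i) (wval W t)))
                = wval W (u ++ ⟨b, β, -2-i, false⟩ :: ⟨c, γ, l.n+i, false⟩ :: t) := by
              rw [wval_append, wval_cons, wval_cons]
            rw [he]
            refine IHw _ (μ_split_lt u t l _ _ (by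
              show β.toNat + γ.toNat < l.d.toNat; omega)) ?_
            intro a ha
            rcases List.mem_append.mp ha with h | h
            · exact hgu a h
            · rcases List.mem_cons.mp h with rfl | h'
              · exact ⟨hbg, by simp⟩
              · rcases List.mem_cons.mp h' with rfl | h''
                · exact ⟨hcg, by simp⟩
                · exact hgt a h''
          · apply Submodule.sum_mem
            intro i _
            rw [map_zsmul]
            apply zsmul_mem'
            have he : applyModesL W.toVertexAlg (toML u)
                (W.mode c (l.n-2-i) (W.mode b i (wval W t)))
                = wval W (u ++ ⟨c, γ, l.n-2-i, false⟩ :: ⟨b, β, (i:ℤ), false⟩ :: t) := by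
              rw [wval_append, wval_cons, wval_cons]
            rw [he]
            refine IHw _ (μ_split_lt u t l _ _ (by
              show γ.toNat + β.toNat < l.d.toNat; omega)) ?_
            intro a ha
            rcases List.mem_append.mp ha with h | h
            · exact hgu a h
            · rcases List.mem_cons.mp h with rfl | h'
              · exact ⟨hcg, by simp⟩
              · rcases List.mem_cons.mp h' with rfl | h''
                · exact ⟨hbg, by simp⟩
                · exact hgt a h''
      exact hsub hdec
    push_neg at hflag
    have hxf : ∀ l ∈ w, l.xf = true := by
      intro l hl
      have := hflag l hl
      revert this
      cases l.xf <;> simp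
    -- CASE 4 : a letter with nonnegative mode index
    by_cases hnn : ∃ l ∈ w, 0 ≤ l.n
    · obtain ⟨u, x, t, rfl, hxn, htneg⟩ := split_last (fun l : Ltr V => 0 ≤ l.n) w hnn
      have hgu : ∀ a ∈ u, GoodL W X a := fun a ha => hg a (by simp [ha])
      cases t with
      | nil =>
          have hv : wval W (u ++ [x]) = 0 := by
            rw [wval_append, wval_cons]
            have : W.mode x.v x.n (wval W ([] : List (Ltr V))) = 0 := by
              rw [wval_nil]
              exact W.creation_nonneg x.v x.n hxn
            rw [this, map_zero]
          rw [hv]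
          exact zero_mem _
      | cons y t' =>
          have hyn : y.n < 0 := by
            have := htneg y (by simp)
            omega
          have hval : wval W (u ++ x :: y :: t')
              = applyModesL W.toVertexAlg (toML u)
                  (W.mode x.v x.n (W.mode y.v y.n (wval W t'))) := by
            rw [wval_append, wval_cons, wval_cons]
          obtain ⟨I, hcomm⟩ := rel_comm W.toVertexAlg x.v y.v (wval W t') x.n y.n
          rw [hval, hcomm, map_add, map_sum]
          apply add_mem
          · have he : applyModesL W.toVertexAlg (toML u)
                (W.mode y.v y.n (W.mode x.v x.n (wval W t')))
                = wval W (u ++ y :: x :: t') := by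
              rw [wval_append, wval_cons, wval_cons]
            rw [he]
            refine IHw _ (μ_swap_R2 u t' x y hxn hyn) ?_
            intro a ha
            rcases List.mem_append.mp ha with h | h
            · exact hgu a h
            · rcases List.mem_cons.mp h with rfl | h'
              · exact hg a (by simp)
              · rcases List.mem_cons.mp h' with rfl | h''
                · exact hg a (by simp)
                · exact hg a (by simp [h''])
          · apply Submodule.sum_mem
            intro i _
            rw [map_zsmul]
            apply zsmul_mem'
            have he : applyModesL W.toVertexAlg (toML u)
                (W.mode (W.mode x.v i y.v) (x.n + y.n - i) (wval W t'))
                = wval W (u ++ ⟨W.mode x.v i y.v, x.d + y.d - i - 1,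
                    x.n + y.n - i, false⟩ :: t') := by
              rw [wval_append, wval_cons]
            rw [he]
            have hx1 : 1 ≤ x.d := hd1 x (by simp)
            have hy1 : 1 ≤ y.d := hd1 y (by simp)
            refine IHw _ (μ_corr_lt u t' x y _ (by
              show (x.d + y.d - i - 1).toNat < x.d.toNat + y.d.toNat; omega)) ?_
            intro a ha
            rcases List.mem_append.mp ha with h | h
            · exact hgu a h
            · rcases List.mem_cons.mp h with rfl | h'
              · constructor
                · exact mode_grading W (hg x (by simp)).1 (hg y (by simp)).1 i
                · simp
              · exact hg a (by simp [h'])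
    push_neg at hnn
    -- CASE 5 : all-negative pure monomials
    by_cases hch : w.Chain' (fun a b : Ltr V => a.n < b.n)
    · apply Submodule.subset_span
      refine ⟨toML w, ?_, ?_, ?_, rfl⟩
      · intro p hp
        obtain ⟨l, hl, rfl⟩ := List.mem_map.mp hp
        exact (hg l hl).2 (hxf l hl)
      · exact (List.isChain_map _).mpr hch
      · intro p hp
        obtain ⟨l, hl, rfl⟩ := List.mem_map.mp hp
        exact hnn l hl
    · obtain ⟨u, x, y, t, rfl, hxy⟩ := split_chain _ w hch
      have hgu : ∀ a ∈ u, GoodL W X a := fun a ha => hg a (by simp [ha])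
      have hgt : ∀ a ∈ t, GoodL W X a := fun a ha => hg a (by simp [ha])
      have hval : wval W (u ++ x :: y :: t)
          = applyModesL W.toVertexAlg (toML u)
              (W.mode x.v x.n (W.mode y.v y.n (wval W t))) := by
        rw [wval_append, wval_cons, wval_cons]
      by_cases heq : y.n < x.n
      · -- R3a : swap
        obtain ⟨I, hcomm⟩ := rel_comm W.toVertexAlg x.v y.v (wval W t) x.n y.n
        rw [hval, hcomm, map_add, map_sum]
        apply add_mem
        · have he : applyModesL W.toVertexAlg (toML u)
              (W.mode y.v y.n (W.mode x.v x.n (wval W t)))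
              = wval W (u ++ y :: x :: t) := by
            rw [wval_append, wval_cons, wval_cons]
          rw [he]
          refine IHw _ (μ_swap_R3 u t x y hnn heq) ?_
          intro a ha
          rcases List.mem_append.mp ha with h | h
          · exact hgu a h
          · rcases List.mem_cons.mp h with rfl | h'
            · exact hg a (by simp)
            · rcases List.mem_cons.mp h' with rfl | h''
              · exact hg a (by simp)
              · exact hgt a h''
        · apply Submodule.sum_mem
          intro i _
          rw [map_zsmul]
          apply zsmul_mem'
          have he : applyModesL W.toVertexAlg (toML u)
              (W.mode (W.mode x.v i y.v) (x.n + y.n - i) (wval W t))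
              = wval W (u ++ ⟨W.mode x.v i y.v, x.d + y.d - i - 1,
                  x.n + y.n - i, false⟩ :: t) := by
            rw [wval_append, wval_cons]
          rw [he]
          have hx1 : 1 ≤ x.d := hd1 x (by simp)
          have hy1 : 1 ≤ y.d := hd1 y (by simp)
          refine IHw _ (μ_corr_lt u t x y _ (by
            show (x.d + y.d - i - 1).toNat < x.d.toNat + y.d.toNat; omega)) ?_
          intro a ha
          rcases List.mem_append.mp ha with h | h
          · exact hgu a h
          · rcases List.mem_cons.mp h with rfl | h'
            · constructor
              · exact mode_grading W (hg x (by simp)).1 (hg y (by simp)).1 i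
              · simp
            · exact hgt a h'
      · -- R3b : diagonal
        have hxneg : x.n < 0 := hnn x (by simp)
        have hyeq : y.n = x.n := by omega
        set m : ℤ := -x.n with hm'
        have hm : 1 ≤ m := by omega
        have hxn : x.n = -m := by omega
        have hyn : y.n = -m := by omega
        obtain ⟨I, J, hmI, hdiag⟩ := rel_diag W.toVertexAlg x.v y.v (wval W t) m hm
        have hval2 : wval W (u ++ x :: y :: t)
            = applyModesL W.toVertexAlg (toML u)
                (W.mode x.v (-m) (W.mode y.v (-m) (wval W t))) := by
          rw [hval, hxn, hyn]
        rw [hval2, hdiag, map_sub, map_sub, map_sum, map_sum]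
        refine sub_mem (sub_mem ?_ ?_) ?_
        · -- merged term
          have he : applyModesL W.toVertexAlg (toML u)
              (W.mode (W.mode x.v (-1) y.v) (-2*m+1) (wval W t))
              = wval W (u ++ ⟨W.mode x.v (-1) y.v, x.d + y.d, -2*m+1, false⟩ :: t) := by
            rw [wval_append, wval_cons]
          rw [he]
          have hx1 : 1 ≤ x.d := hd1 x (by simp)
          have hy1 : 1 ≤ y.d := hd1 y (by simp)
          refine IHw _ (μ_merge_lt u t x y _ (by
            show (x.d + y.d).toNat = x.d.toNat + y.d.toNat; omega)) ?_
          intro a ha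
          rcases List.mem_append.mp ha with h | h
          · exact hgu a h
          · rcases List.mem_cons.mp h with rfl | h'
            · constructor
              · have hmg := mode_grading W (hg x (by simp)).1 (hg y (by simp)).1 (-1)
                have hee : x.d + y.d - (-1) - 1 = x.d + y.d := by ring
                rw [hee] at hmg
                exact hmg
              · simp
            · exact hgt a h'
        · -- spread terms
          apply Submodule.sum_mem
          intro i hi
          have hine : (i : ℤ) ≠ m - 1 := by
            have h1 : i ≠ m.toNat - 1 := (Finset.mem_erase.mp hi).1
            omega
          have he : applyModesL W.toVertexAlg (toML u)
              (W.mode x.v (-1-i) (W.mode y.v (-2*m+1+i) (wval W t)))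
              = wval W (u ++ {x with n := -1-(i:ℤ)} :: {y with n := -2*m+1+(i:ℤ)} :: t) := by
            rw [wval_append, wval_cons, wval_cons]
          rw [he]
          refine IHw _ (μ_diag_pair_lt u t x y m i hm hxn hyn hine hnn hd1) ?_
          intro a ha
          rcases List.mem_append.mp ha with h | h
          · exact hgu a h
          · rcases List.mem_cons.mp h with rfl | h'
            · exact hg x (by simp)
            · rcases List.mem_cons.mp h' with rfl | h''
              · exact hg y (by simp)
              · exact hgt a h''
        · -- tail terms
          apply Submodule.sum_mem
          intro i _
          have he : applyModesL W.toVertexAlg (toML u)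
              (W.mode y.v (-2*m-i) (W.mode x.v i (wval W t)))
              = wval W (u ++ {y with n := -2*m-(i:ℤ)} :: {x with n := (i:ℤ)} :: t) := by
            rw [wval_append, wval_cons, wval_cons]
          rw [he]
          refine IHw _ (μ_diag_tail_lt u t x y m i hm hnn) ?_
          intro a ha
          rcases List.mem_append.mp ha with h | h
          · exact hgu a h
          · rcases List.mem_cons.mp h with rfl | h'
            · exact hg y (by simp)
            · rcases List.mem_cons.mp h' with rfl | h''
              · exact hg x (by simp)
              · exact hgt a h''
  intro w hg
  exact main (μm w) w rfl hg

end Main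
/-- Gaberdiel–Neitzke: representatives of a spanning set of `V/C_2(V)` span `V`
via elements with strictly increasing negative indices (difference-one condition). -/
theorem stmt9 (W : VOA V) (X : Set V) (wt : V → ℤ)
    (hhom : ∀ u ∈ X, u ∈ W.grading (wt u))
    (hspan : Submodule.span ℂ ((Cspace V W.toVertexAlg 2).mkQ '' X) = ⊤) :
    Submodule.span ℂ { x | ∃ L : List (V × ℤ),
      (∀ p ∈ L, p.1 ∈ X) ∧
      L.Chain' (fun p q => p.2 < q.2) ∧
      (∀ p ∈ L, p.2 < 0) ∧
      x = applyModes V W.toVertexAlg L W.vac } = (⊤ : Submodule ℂ V) := by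
  rw [eq_top_iff]
  intro v _
  obtain ⟨f, hmem, hsum⟩ := exists_homog_decomp W v
  rw [← hsum, Finsupp.sum]
  apply Submodule.sum_mem
  intro i _
  have hw := words_span W X wt hhom hspan [⟨f i, i, -1, false⟩]
    (by
      intro l hl
      rcases List.mem_cons.mp hl with rfl | h
      · exact ⟨hmem i, by simp⟩
      · simp at h)
  have hv : wval W [⟨f i, i, -1, false⟩] = f i := by
    rw [wval_cons, wval_nil]
    exact W.creation_neg_one (f i)
  rw [hv] at hw
  exact hw

end VOAPaper
end
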